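/- arXiv:1812.00533 — 5 statements merged into one kernel-verified Lean document; each statement's English description precedes it below -/
import Mathlib

section
/- Fix a positive integer m. Let B be a singleton board with n columns whose m-level root vector ξ_m(B) has maximum entry M, and suppose the first (leftmost) occurrence of M in ξ_m(B) is in position j. Then the vertex B is connected by a path of edges in the m-level rook equivalence graph G_m(B) to a singleton board B′ whose m-level root vector ξ_m(B′) agrees with ξ_m(B) in the first j positions and is weakly decreasing for indices i ≥ j. -/
/-- An `m`-level rook placement on the board with column heights `b`:
a set of cells (column, row) inside the board, no two sharing a column or a level.
Cells are 0-indexed: cell `(i, j)` lies in the board iff `j < b i`, and the level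
of row `j` is `j / m`. -/
def IsMLevelPlacement {n : ℕ} (m : ℕ) (b : Fin n → ℕ) (P : Finset (Fin n × ℕ)) : Prop :=
  (∀ c ∈ P, c.2 < b c.1) ∧
  ∀ c ∈ P, ∀ d ∈ P, c ≠ d → c.1 ≠ d.1 ∧ c.2 / m ≠ d.2 / m

/-- The `k`-th `m`-level rook number of the board `b`. -/
noncomputable def mRookNum {n : ℕ} (m : ℕ) (b : Fin n → ℕ) (k : ℕ) : ℕ :=
  Set.ncard {P : Finset (Fin n × ℕ) | IsMLevelPlacement m b P ∧ P.card = k}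

/-- Two boards are `m`-level rook equivalent if all their `m`-level rook numbers agree. -/
def MRookEquiv {n₁ n₂ : ℕ} (m : ℕ) (b₁ : Fin n₁ → ℕ) (b₂ : Fin n₂ → ℕ) : Prop :=
  ∀ k, mRookNum m b₁ k = mRookNum m b₂ k

/-- The `m`-floor of a natural number: the largest multiple of `m` that is `≤ o`. -/
def mFloor (m o : ℕ) : ℕ := m * (o / m)

/-- The `m`-floor of an integer: the largest multiple of `m` that is `≤ o`. -/
def mFloorZ (m : ℕ) (o : ℤ) : ℤ := o - o % (m : ℤ)

/-- A singleton board: a Ferrers board (weakly increasing column heights) such that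
whenever a column height `b i` is not a multiple of `m`, the `m`-floor of the next
column height is strictly larger. -/
def IsSingletonBoard {n : ℕ} (m : ℕ) (b : Fin n → ℕ) : Prop :=
  Monotone b ∧ ∀ i j : Fin n, (j : ℕ) = (i : ℕ) + 1 → ¬ (m ∣ b i) →
    mFloor m (b i) < mFloor m (b j)

/-- The `m`-level root vector of a board: the (0-indexed) `i`-th entry is
`m * i - b i` (1-indexed: `m(i-1) - b_i`). -/
def mRootVec {n : ℕ} (m : ℕ) (b : Fin n → ℕ) : Fin n → ℤ :=
  fun i => (m : ℤ) * (i : ℤ) - (b i : ℤ)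

/-- `b₁` is obtained from `b₂` by moving `k > 0` squares out of one column into a
single other column. -/
def MovesSquares {n : ℕ} (b₁ b₂ : Fin n → ℕ) : Prop :=
  ∃ (i j : Fin n) (k : ℕ), i ≠ j ∧ 0 < k ∧ b₁ i = b₂ i + k ∧ b₂ j = b₁ j + k ∧
    ∀ l, l ≠ i → l ≠ j → b₁ l = b₂ l

/-- A singleton board with `n` columns (for the fixed level size `m`). -/
def SingletonBoard (m n : ℕ) : Type := {b : Fin n → ℕ // IsSingletonBoard m b}

/-- The `m`-level rook equivalence graph of the equivalence class of `B`: vertices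
are the singleton boards with `n` columns `m`-level rook equivalent to `B`; two
distinct boards are adjacent when one is obtained from the other by moving squares
out of one column into a single other column. -/
def mRookEquivGraph {n : ℕ} (m : ℕ) (B : SingletonBoard m n) :
    SimpleGraph {C : SingletonBoard m n // MRookEquiv m C.1 B.1} :=
  SimpleGraph.fromRel fun C D => MovesSquares C.1.1 D.1.1

/-- `mEntryCount m b k` is `v_k`, the number of entries of the `m`-level root
vector of `b` equal to `k`. -/
def mEntryCount {n : ℕ} (m : ℕ) (b : Fin n → ℕ) (k : ℕ) : ℕ :=
  (Finset.univ.filter fun l => mRootVec m b l = (k : ℤ)).card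

open Finset

namespace Stmt10

variable {n : ℕ}

def plSet (m : ℕ) (b : Fin n → ℕ) (k : ℕ) : Set (Finset (Fin n × ℕ)) :=
  {P | IsMLevelPlacement m b P ∧ P.card = k}

lemma mRookNum_eq_ncard (m : ℕ) (b : Fin n → ℕ) (k : ℕ) :
    mRookNum m b k = (plSet m b k).ncard := rfl

lemma cols_injOn {m : ℕ} {b : Fin n → ℕ} {P : Finset (Fin n × ℕ)}
    (hP : IsMLevelPlacement m b P) : Set.InjOn Prod.fst (P : Set (Fin n × ℕ)) := by
  intro c hc d hd h
  by_contra hne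
  exact (hP.2 c hc d hd hne).1 h

lemma card_le_of_placement {m : ℕ} {b : Fin n → ℕ} {P : Finset (Fin n × ℕ)}
    (hP : IsMLevelPlacement m b P) : P.card ≤ n := by
  calc P.card = (P.image Prod.fst).card := (Finset.card_image_of_injOn (cols_injOn hP)).symm
    _ ≤ n := by
        simpa using Finset.card_le_card (Finset.subset_univ (P.image Prod.fst))

lemma plSet_finite (m : ℕ) (b : Fin n → ℕ) (k : ℕ) : (plSet m b k).Finite := by
  apply Set.Finite.subset ((Finset.univ ×ˢ Finset.range (Finset.univ.sup b)).powerset :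
    Finset (Finset (Fin n × ℕ))).finite_toSet
  intro P hP
  simp only [Finset.coe_powerset, Set.mem_preimage, Set.mem_powerset_iff, Finset.coe_subset,
    Finset.mem_coe]
  intro c hc
  simp only [Finset.mem_product, Finset.mem_univ, true_and, Finset.mem_range]
  exact lt_of_lt_of_le (hP.1.1 c hc) (Finset.le_sup (Finset.mem_univ c.1))

noncomputable def plFin (m : ℕ) (b : Fin n → ℕ) (k : ℕ) : Finset (Finset (Fin n × ℕ)) :=
  (plSet_finite m b k).toFinset

lemma mem_plFin {m : ℕ} {b : Fin n → ℕ} {k : ℕ} {P : Finset (Fin n × ℕ)} :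
    P ∈ plFin m b k ↔ IsMLevelPlacement m b P ∧ P.card = k := by
  simp [plFin, plSet]

lemma mRookNum_eq_card (m : ℕ) (b : Fin n → ℕ) (k : ℕ) :
    mRookNum m b k = (plFin m b k).card := by
  rw [mRookNum_eq_ncard, Set.ncard_eq_toFinset_card _ (plSet_finite m b k)]
  rfl

lemma mRookNum_zero (m : ℕ) (b : Fin n → ℕ) : mRookNum m b 0 = 1 := by
  rw [mRookNum_eq_card]
  have : plFin m b 0 = {∅} := by
    ext P
    simp only [mem_plFin, Finset.mem_singleton, Finset.card_eq_zero]
    constructor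
    · rintro ⟨-, h⟩; exact h
    · rintro rfl
      refine ⟨⟨?_, ?_⟩, rfl⟩ <;> intro c hc <;> simp at hc
  rw [this]; rfl

lemma mRookNum_of_gt (m : ℕ) (b : Fin n → ℕ) {k : ℕ} (hk : n < k) : mRookNum m b k = 0 := by
  rw [mRookNum_eq_card, Finset.card_eq_zero]
  ext P
  simp only [mem_plFin, Finset.notMem_empty, iff_false]
  rintro ⟨h1, h2⟩
  exact absurd (card_le_of_placement h1) (by omega)

end Stmt10

namespace Stmt10
variable {n : ℕ}

lemma mFloor_le (m o : ℕ) : mFloor m o ≤ o := by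
  rw [mFloor, Nat.mul_comm]; exact Nat.div_mul_le_self o m

lemma lt_mFloor_add (m o : ℕ) (hm : 0 < m) : o < mFloor m o + m := by
  have h1 := Nat.div_add_mod o m
  have h2 := Nat.mod_lt o hm
  rw [mFloor]; omega

lemma mFloor_mono (m : ℕ) {o o' : ℕ} (h : o ≤ o') : mFloor m o ≤ mFloor m o' :=
  Nat.mul_le_mul_left m (Nat.div_le_div_right h)

lemma mFloor_of_dvd {m o : ℕ} (h : m ∣ o) : mFloor m o = o := Nat.mul_div_cancel' h

lemma dvd_mFloor (m o : ℕ) : m ∣ mFloor m o := Dvd.intro _ rfl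

lemma singleton_step {m : ℕ} {b : Fin n → ℕ} (hb : IsSingletonBoard m b) (hm : 0 < m)
    {i j : Fin n} (hij : (j : ℕ) = (i : ℕ) + 1) : b i ≤ mFloor m (b j) := by
  by_cases hd : m ∣ b i
  · rw [← mFloor_of_dvd hd]
    exact mFloor_mono m (hb.1 (by rw [Fin.le_def]; omega))
  · have h1 := hb.2 i j hij hd
    have h2 : mFloor m (b i) + m ≤ mFloor m (b j) := by
      obtain ⟨x, hx⟩ := dvd_mFloor m (b i)
      obtain ⟨y, hy⟩ := dvd_mFloor m (b j)
      rw [hx, hy] at h1 ⊢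
      have : x < y := by
        rcases Nat.lt_or_ge x y with h | h
        · exact h
        · exact absurd (Nat.mul_le_mul_left m h) (by omega)
      calc m * x + m = m * (x+1) := by ring
        _ ≤ m * y := Nat.mul_le_mul_left m this
    have := lt_mFloor_add m (b i) hm
    omega

lemma singleton_chain {m : ℕ} {b : Fin n → ℕ} (hb : IsSingletonBoard m b) (hm : 0 < m)
    {i j : Fin n} (hij : i < j) : b i ≤ mFloor m (b j) := by
  suffices H : ∀ d (j : Fin n), (j : ℕ) = (i : ℕ) + 1 + d → b i ≤ mFloor m (b j) by
    exact H ((j:ℕ) - (i:ℕ) - 1) j (by rw [Fin.lt_def] at hij; omega)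
  intro d
  induction d with
  | zero => exact fun j hj => singleton_step hb hm (by omega)
  | succ d ih =>
    intro j hj
    have hj0 : (j : ℕ) - 1 < n := by omega
    set j' : Fin n := ⟨(j : ℕ) - 1, hj0⟩ with hj'
    have h1 : b i ≤ mFloor m (b j') := ih j' (by simp only [hj']; omega)
    have h2 : b j' ≤ mFloor m (b j) := singleton_step hb hm (by simp only [hj']; omega)
    exact le_trans h1 (le_trans (mFloor_le m _) h2)

lemma div_eq_iff_of_pos {m : ℕ} (hm : 0 < m) {r ℓ : ℕ} :
    r / m = ℓ ↔ m * ℓ ≤ r ∧ r < m * ℓ + m := by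
  constructor
  · rintro rfl
    have h1 := Nat.div_add_mod r m
    have h2 := Nat.mod_lt r hm
    constructor <;> omega
  · rintro ⟨h1, h2⟩
    have ha : ℓ ≤ r / m := (Nat.le_div_iff_mul_le hm).2 (by rw [Nat.mul_comm]; exact h1)
    have hbb : r / m < ℓ + 1 := (Nat.div_lt_iff_lt_mul hm).2
      (by rw [Nat.succ_mul]; rw [Nat.mul_comm] at h2; omega)
    omega

/-- counting available rows in a column of height `h` given blocked levels from `Q` -/
lemma avail_card {N m : ℕ} (hm : 0 < m) (h : ℕ) (Q : Finset (Fin N × ℕ))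
    (hlev : ∀ c ∈ Q, ∀ d ∈ Q, c ≠ d → c.2 / m ≠ d.2 / m)
    (hin : ∀ c ∈ Q, m * (c.2 / m) + m ≤ h) :
    m * Q.card ≤ h ∧
    ((Finset.range h).filter fun r => ∀ c ∈ Q, r / m ≠ c.2 / m).card = h - m * Q.card := by
  classical
  set Lset := Q.image (fun c => c.2 / m) with hL
  have hLcard : Lset.card = Q.card := Finset.card_image_of_injOn (by
    intro c hc d hd hcd
    by_contra hne
    exact hlev c hc d hd hne hcd)
  set blocked := Lset.biUnion (fun ℓ => Finset.Ico (m*ℓ) (m*ℓ+m)) with hBl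
  have hdisj : ∀ ℓ₁ ∈ Lset, ∀ ℓ₂ ∈ Lset, ℓ₁ ≠ ℓ₂ →
      Disjoint (Finset.Ico (m*ℓ₁) (m*ℓ₁+m)) (Finset.Ico (m*ℓ₂) (m*ℓ₂+m)) := by
    intro ℓ₁ _ ℓ₂ _ hne
    rw [Finset.disjoint_left]
    intro r hr1 hr2
    simp only [Finset.mem_Ico] at hr1 hr2
    have e1 : r / m = ℓ₁ := (div_eq_iff_of_pos hm).2 ⟨hr1.1, hr1.2⟩
    have e2 : r / m = ℓ₂ := (div_eq_iff_of_pos hm).2 ⟨hr2.1, hr2.2⟩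
    exact hne (e1 ▸ e2 ▸ rfl)
  have hBcard : blocked.card = m * Q.card := by
    rw [hBl, Finset.card_biUnion hdisj]
    simp only [Nat.card_Ico]
    rw [Finset.sum_congr rfl (fun ℓ _ => by omega : ∀ ℓ ∈ Lset, m*ℓ+m - m*ℓ = m)]
    rw [Finset.sum_const, hLcard]; ring
  have hBsub : blocked ⊆ Finset.range h := by
    intro r hr
    simp only [hBl, Finset.mem_biUnion, hL, Finset.mem_image] at hr
    obtain ⟨ℓ, ⟨c, hc, rfl⟩, hr⟩ := hr
    simp only [Finset.mem_Ico] at hr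
    have := hin c hc
    rw [Finset.mem_range]
    omega
  have hle : m * Q.card ≤ h := by
    have := Finset.card_le_card hBsub
    rw [hBcard] at this; simpa using this
  refine ⟨hle, ?_⟩
  have hset : (Finset.range h).filter (fun r => ∀ c ∈ Q, r / m ≠ c.2 / m)
      = Finset.range h \ blocked := by
    ext r
    simp only [Finset.mem_filter, Finset.mem_sdiff, hBl, Finset.mem_biUnion, hL,
      Finset.mem_image, Finset.mem_Ico, not_exists]
    constructor
    · rintro ⟨hr, hall⟩
      refine ⟨hr, ?_⟩
      rintro ℓ ⟨⟨c, hc, rfl⟩, hge, hlt⟩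
      exact hall c hc ((div_eq_iff_of_pos hm).2 ⟨hge, hlt⟩)
    · rintro ⟨hr, hnb⟩
      refine ⟨hr, fun c hc heq => ?_⟩
      have h3 := (div_eq_iff_of_pos hm).1 heq
      exact hnb (c.2 / m) ⟨⟨c, hc, rfl⟩, h3.1, h3.2⟩
  rw [hset, Finset.card_sdiff_of_subset hBsub, hBcard, Finset.card_range]

end Stmt10

namespace Stmt10
variable {n : ℕ}

lemma placement_subset {N m : ℕ} {b : Fin N → ℕ} {P Q : Finset (Fin N × ℕ)}
    (hP : IsMLevelPlacement m b P) (hQP : Q ⊆ P) : IsMLevelPlacement m b Q :=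
  ⟨fun c hc => hP.1 c (hQP hc), fun c hc d hd hne => hP.2 c (hQP hc) d (hQP hd) hne⟩

def emb (n : ℕ) : Fin n × ℕ ↪ Fin (n+1) × ℕ :=
  ⟨fun c => (c.1.castSucc, c.2), by
    rintro ⟨i, r⟩ ⟨i', r'⟩ h
    simp only [Prod.mk.injEq] at h ⊢
    exact ⟨Fin.castSucc_injective n h.1, h.2⟩⟩

lemma mem_map_emb {Q : Finset (Fin n × ℕ)} {c : Fin (n+1) × ℕ} :
    c ∈ Q.map (emb n) ↔ ∃ d ∈ Q, (d.1.castSucc, d.2) = c := by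
  simp only [Finset.mem_map, emb, Function.Embedding.coeFn_mk]
  rfl

lemma map_emb_no_last {Q : Finset (Fin n × ℕ)} {c : Fin (n+1) × ℕ}
    (hc : c ∈ Q.map (emb n)) : c.1 ≠ Fin.last n := by
  obtain ⟨d, _, rfl⟩ := mem_map_emb.1 hc
  exact (Fin.castSucc_lt_last d.1).ne

lemma map_placement_iff {m : ℕ} {b : Fin (n+1) → ℕ} {Q : Finset (Fin n × ℕ)} :
    IsMLevelPlacement m b (Q.map (emb n)) ↔ IsMLevelPlacement m (b ∘ Fin.castSucc) Q := by
  constructor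
  · rintro ⟨h1, h2⟩
    constructor
    · intro c hc
      exact h1 (c.1.castSucc, c.2) (mem_map_emb.2 ⟨c, hc, rfl⟩)
    · intro c hc d hd hne
      have := h2 (c.1.castSucc, c.2) (mem_map_emb.2 ⟨c, hc, rfl⟩)
        (d.1.castSucc, d.2) (mem_map_emb.2 ⟨d, hd, rfl⟩)
        (by simp only [ne_eq, Prod.mk.injEq, not_and]
            intro hcs
            have : c.1 = d.1 := Fin.castSucc_injective n hcs
            intro h2'
            exact hne (Prod.ext this h2'))
      exact ⟨fun h => this.1 (by rw [h]), this.2⟩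
  · rintro ⟨h1, h2⟩
    constructor
    · intro c hc
      obtain ⟨d, hd, rfl⟩ := mem_map_emb.1 hc
      exact h1 d hd
    · intro c hc d hd hne
      obtain ⟨c', hc', rfl⟩ := mem_map_emb.1 hc
      obtain ⟨d', hd', rfl⟩ := mem_map_emb.1 hd
      have hne' : c' ≠ d' := by
        rintro rfl; exact hne rfl
      have := h2 c' hc' d' hd' hne'
      exact ⟨by simpa using fun h => this.1 (Fin.castSucc_injective n h), this.2⟩

lemma exists_preimage {P : Finset (Fin (n+1) × ℕ)} (h : ∀ c ∈ P, c.1 ≠ Fin.last n) :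
    ∃ Q : Finset (Fin n × ℕ), Q.map (emb n) = P := by
  classical
  refine ⟨P.attach.image (fun c => (c.1.1.castPred (h c.1 c.2), c.1.2)), ?_⟩
  ext x
  simp only [mem_map_emb, Finset.mem_image, Finset.mem_attach, true_and, Subtype.exists]
  constructor
  · rintro ⟨d, ⟨a, ha, rfl⟩, rfl⟩
    simpa [Fin.castSucc_castPred] using ha
  · intro hx
    exact ⟨(x.1.castPred (h x hx), x.2), ⟨x, hx, rfl⟩, by simp [Fin.castSucc_castPred]⟩

section C1
variable {m : ℕ} (hm : 0 < m) {b : Fin (n+1) → ℕ} (hb : IsSingletonBoard m b)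

include hb in
lemma front_singleton : IsSingletonBoard m (b ∘ Fin.castSucc) := by
  constructor
  · intro i j hij
    exact hb.1 (by rw [Fin.le_def] at hij ⊢; simpa using hij)
  · intro i j hji hnd
    exact hb.2 i.castSucc j.castSucc (by simpa using hji) hnd

lemma mult_add_le {u v : ℕ} (hu : m ∣ u) (hv : m ∣ v) (huv : u < v) : u + m ≤ v := by
  obtain ⟨x, rfl⟩ := hu
  obtain ⟨y, rfl⟩ := hv
  have hx : x < y := by
    rcases Nat.lt_or_ge x y with h | h
    · exact h
    · exact absurd (Nat.mul_le_mul_left m h) (by omega)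
  calc m * x + m = m * (x + 1) := by ring
    _ ≤ m * y := Nat.mul_le_mul_left m (by omega)

include hm hb in
lemma level_in_last {Q : Finset (Fin n × ℕ)}
    (hQ : IsMLevelPlacement m (b ∘ Fin.castSucc) Q) :
    ∀ c ∈ Q, m * (c.2 / m) + m ≤ b (Fin.last n) := by
  intro c hc
  have h1 : c.2 < b c.1.castSucc := hQ.1 c hc
  have h2 : b c.1.castSucc ≤ mFloor m (b (Fin.last n)) :=
    singleton_chain hb hm (Fin.castSucc_lt_last c.1)
  have h3 : m * (c.2 / m) ≤ c.2 := by
    have := Nat.div_add_mod c.2 m; omega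
  have h4 : m * (c.2 / m) < mFloor m (b (Fin.last n)) := by omega
  have h5 := mult_add_le (m := m) ⟨_, rfl⟩ (dvd_mFloor m (b (Fin.last n))) h4
  have := mFloor_le m (b (Fin.last n))
  omega

def avail (mm : ℕ) (bl : ℕ) (Q : Finset (Fin n × ℕ)) : Finset ℕ :=
  (Finset.range bl).filter fun r => ∀ c ∈ Q, r / mm ≠ c.2 / mm

include hm hb in
lemma avail_card' {k : ℕ} {Q : Finset (Fin n × ℕ)} (hQ : Q ∈ plFin m (b ∘ Fin.castSucc) k) :
    m * k ≤ b (Fin.last n) ∧ (avail m (b (Fin.last n)) Q).card = b (Fin.last n) - m * k := by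
  rw [mem_plFin] at hQ
  have := avail_card (N := n) hm (b (Fin.last n)) Q (fun c hc d hd hne => (hQ.1.2 c hc d hd hne).2)
    (level_in_last hm hb hQ.1)
  rw [hQ.2] at this
  exact this

/-- the A part : placements avoiding the last column -/
lemma A_eq (k : ℕ) :
    (plFin m b k).filter (fun P => ∀ c ∈ P, c.1 ≠ Fin.last n)
      = (plFin m (b ∘ Fin.castSucc) k).image (fun Q => Q.map (emb n)) := by
  ext P
  simp only [Finset.mem_filter, Finset.mem_image, mem_plFin]
  constructor
  · rintro ⟨⟨hP, hcard⟩, hlast⟩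
    obtain ⟨Q, rfl⟩ := exists_preimage hlast
    exact ⟨Q, ⟨map_placement_iff.1 hP, by simpa using hcard⟩, rfl⟩
  · rintro ⟨Q, ⟨hQ, hcard⟩, rfl⟩
    exact ⟨⟨map_placement_iff.2 hQ, by simpa using hcard⟩, fun c hc => map_emb_no_last hc⟩

include hm hb in
lemma B_eq (k : ℕ) :
    (plFin m b (k+1)).filter (fun P => ¬ ∀ c ∈ P, c.1 ≠ Fin.last n)
      = (plFin m (b ∘ Fin.castSucc) k).biUnion
          (fun Q => (avail m (b (Fin.last n)) Q).image
            (fun r => insert (Fin.last n, r) (Q.map (emb n)))) := by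
  classical
  ext P
  simp only [Finset.mem_filter, Finset.mem_biUnion, Finset.mem_image, mem_plFin]
  constructor
  · rintro ⟨⟨hP, hcard⟩, hlast⟩
    push_neg at hlast
    obtain ⟨c, hc, hcl⟩ := hlast
    have hcl' : c = (Fin.last n, c.2) := Prod.ext hcl rfl
    set P' := P.erase c with hP'
    have hP'last : ∀ d ∈ P', d.1 ≠ Fin.last n := by
      intro d hd
      have hdP := Finset.mem_of_mem_erase hd
      have hdc : d ≠ c := Finset.ne_of_mem_erase hd
      intro hdl
      exact (hP.2 d hdP c hc hdc).1 (by rw [hdl, hcl])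
    obtain ⟨Q, hQ⟩ := exists_preimage hP'last
    have hQpl : IsMLevelPlacement m (b ∘ Fin.castSucc) Q :=
      map_placement_iff.1 (hQ ▸ placement_subset hP (Finset.erase_subset c P))
    refine ⟨Q, ⟨hQpl, ?_⟩, c.2, ?_, ?_⟩
    · have : P'.card = k := by rw [hP', Finset.card_erase_of_mem hc, hcard]; omega
      rw [← this, ← hQ, Finset.card_map]
    · rw [avail, Finset.mem_filter, Finset.mem_range]
      refine ⟨by have := hP.1 c hc; rwa [hcl] at this, ?_⟩
      intro d hd
      have hdP' : (emb n) d ∈ P' := by rw [← hQ]; exact Finset.mem_map_of_mem _ hd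
      have hdP := Finset.mem_of_mem_erase hdP'
      have hdc : (emb n) d ≠ c := Finset.ne_of_mem_erase hdP'
      have := (hP.2 c hc ((emb n) d) hdP (fun h => hdc h.symm)).2
      exact fun h => this (by simpa [emb] using h ▸ rfl)
    · rw [hQ, hP', ← hcl']
      exact Finset.insert_erase hc
  · rintro ⟨Q, ⟨hQ, hcard⟩, r, hr, rfl⟩
    rw [avail, Finset.mem_filter, Finset.mem_range] at hr
    have hnotin : (Fin.last n, r) ∉ Q.map (emb n) := by
      intro h
      exact map_emb_no_last h rfl
    have hmem : ∀ c ∈ insert (Fin.last n, r) (Q.map (emb n)),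
        c = (Fin.last n, r) ∨ c ∈ Q.map (emb n) := by
      intro c hc; simpa using hc
    refine ⟨⟨?_, ?_⟩, ?_⟩
    · constructor
      · intro c hc
        rcases hmem c hc with rfl | hc'
        · exact hr.1
        · exact (map_placement_iff.2 hQ).1 c hc'
      · intro c hc d hd hne
        rcases hmem c hc with rfl | hc' <;> rcases hmem d hd with rfl | hd'
        · exact absurd rfl hne
        · obtain ⟨d', hd'', rfl⟩ := mem_map_emb.1 hd'
          exact ⟨(Fin.castSucc_lt_last d'.1).ne', fun h => hr.2 d' hd'' h⟩
        · obtain ⟨c', hc'', rfl⟩ := mem_map_emb.1 hc'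
          exact ⟨(Fin.castSucc_lt_last c'.1).ne, fun h => hr.2 c' hc'' h.symm⟩
        · exact (map_placement_iff.2 hQ).2 c hc' d hd' hne
    · rw [Finset.card_insert_of_notMem hnotin, Finset.card_map, hcard]
    · push_neg
      exact ⟨(Fin.last n, r), Finset.mem_insert_self _ _, by simp⟩

include hm hb in
lemma c1 (k : ℕ) :
    mRookNum m b (k+1) = mRookNum m (b ∘ Fin.castSucc) (k+1)
      + mRookNum m (b ∘ Fin.castSucc) k * (b (Fin.last n) - m * k) := by
  classical
  rw [mRookNum_eq_card, mRookNum_eq_card, mRookNum_eq_card]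
  rw [← Finset.card_filter_add_card_filter_not
    (s := plFin m b (k+1)) (p := fun P => ∀ c ∈ P, c.1 ≠ Fin.last n)]
  congr 1
  · rw [A_eq, Finset.card_image_of_injective _ (Finset.map_injective (emb n))]
  · rw [B_eq hm hb k, Finset.card_biUnion]
    · rw [Finset.sum_congr rfl (fun Q hQ => ?_), Finset.sum_const, smul_eq_mul]
      rw [Finset.card_image_of_injective]
      · exact (avail_card' hm hb hQ).2
      · intro r r' hrr'
        have h2 : insert (Fin.last n, r) (Q.map (emb n))
            = insert (Fin.last n, r') (Q.map (emb n)) := hrr'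
        have : (Fin.last n, r) ∈ insert (Fin.last n, r') (Q.map (emb n)) :=
          h2 ▸ Finset.mem_insert_self _ _
        rcases Finset.mem_insert.1 this with h | h
        · exact (Prod.ext_iff.1 h).2
        · exact absurd (map_emb_no_last h) (by simp)
    · intro Q hQ Q' hQ' hne
      rw [Function.onFun, Finset.disjoint_left]
      rintro P hP hP'
      simp only [Finset.mem_image] at hP hP'
      obtain ⟨r, hr, rfl⟩ := hP
      obtain ⟨r', hr', hPP⟩ := hP'
      have hnotin : (Fin.last n, r) ∉ Q.map (emb n) := fun h => map_emb_no_last h rfl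
      have hnotin' : (Fin.last n, r') ∉ Q'.map (emb n) := fun h => map_emb_no_last h rfl
      have hrr : r' = r := by
        have : (Fin.last n, r') ∈ insert (Fin.last n, r) (Q.map (emb n)) := by
          rw [← hPP]; exact Finset.mem_insert_self _ _
        rcases Finset.mem_insert.1 this with h | h
        · exact (Prod.ext_iff.1 h).2
        · exact absurd (map_emb_no_last h) (by simp)
      rw [hrr] at hPP hnotin'
      have : Q'.map (emb n) = Q.map (emb n) := by
        have := congrArg (fun S => Finset.erase S (Fin.last n, r)) hPP
        simpa only [Finset.erase_insert hnotin, Finset.erase_insert hnotin'] using this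
      exact hne (Finset.map_injective (emb n) this).symm

include hm hb in
lemma c1_bound {k : ℕ} (hk : mRookNum m (b ∘ Fin.castSucc) k ≠ 0) :
    m * k ≤ b (Fin.last n) := by
  rw [mRookNum_eq_card] at hk
  obtain ⟨Q, hQ⟩ := Finset.card_ne_zero.1 hk |>.exists_mem
  exact (avail_card' hm hb hQ).1

end C1
end Stmt10

namespace Stmt10
open Polynomial
variable {n : ℕ}

noncomputable def Hpoly (m : ℕ) (j : ℕ) : ℤ[X] :=
  ∏ t ∈ Finset.range j, (C (m : ℤ) * X - C ((m : ℤ) * t))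

noncomputable def Gpoly (m : ℕ) {n : ℕ} (b : Fin n → ℕ) : ℤ[X] :=
  ∑ k ∈ Finset.range (n + 1), C ((mRookNum m b k : ℤ)) * Hpoly m (n - k)

lemma hpoly_factor_ne (m : ℕ) (hm : 0 < m) (t : ℕ) :
    (C (m : ℤ) * X - C ((m : ℤ) * t)) ≠ 0 := by
  have h : (C (m : ℤ) * X - C ((m : ℤ) * t)) = C (m : ℤ) * X + C (-((m : ℤ) * t)) := by
    rw [map_neg, sub_eq_add_neg]
  intro h0
  have : ((m : ℤ)) ≠ 0 := by exact_mod_cast hm.ne'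
  have := Polynomial.natDegree_linear (a := (m:ℤ)) (b := -((m:ℤ)*t)) this
  rw [← h, h0] at this
  simp at this

lemma hpoly_natDegree (m : ℕ) (hm : 0 < m) (j : ℕ) : (Hpoly m j).natDegree = j := by
  rw [Hpoly, Polynomial.natDegree_prod _ _ (fun t _ => hpoly_factor_ne m hm t)]
  have : ∀ t ∈ Finset.range j, (C (m : ℤ) * X - C ((m : ℤ) * t)).natDegree = 1 := by
    intro t _
    rw [sub_eq_add_neg, ← map_neg C]
    exact Polynomial.natDegree_linear (by exact_mod_cast hm.ne')
  rw [Finset.sum_congr rfl this, Finset.sum_const, Finset.card_range, smul_eq_mul, mul_one]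

lemma hpoly_leadingCoeff (m : ℕ) (hm : 0 < m) (j : ℕ) :
    (Hpoly m j).leadingCoeff = (m : ℤ) ^ j := by
  rw [Hpoly, Polynomial.leadingCoeff_prod]
  have : ∀ t ∈ Finset.range j, (C (m : ℤ) * X - C ((m : ℤ) * t)).leadingCoeff = (m : ℤ) := by
    intro t _
    rw [sub_eq_add_neg, ← map_neg C]
    exact Polynomial.leadingCoeff_linear (by exact_mod_cast hm.ne')
  rw [Finset.prod_congr rfl this, Finset.prod_const, Finset.card_range]

lemma gpoly_succ {m : ℕ} (hm : 0 < m) {b : Fin (n+1) → ℕ} (hb : IsSingletonBoard m b) :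
    Gpoly m b = Gpoly m (b ∘ Fin.castSucc)
      * (C (m : ℤ) * X - C (mRootVec m b (Fin.last n))) := by
  classical
  have hc1Z : ∀ k : ℕ, ((mRookNum m b (k+1) : ℤ))
      = (mRookNum m (b ∘ Fin.castSucc) (k+1) : ℤ)
        + (mRookNum m (b ∘ Fin.castSucc) k : ℤ) * ((b (Fin.last n) : ℤ) - m * k) := by
    intro k
    by_cases h : mRookNum m (b ∘ Fin.castSucc) k = 0
    · rw [c1 hm hb k, h]
      push_cast
      try ring
    · have hbd := c1_bound hm hb h
      rw [c1 hm hb k, Nat.cast_add, Nat.cast_mul, Nat.cast_sub hbd, Nat.cast_mul]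
      try ring
  have hr0 : ((mRookNum m b 0 : ℤ)) = 1 := by rw [mRookNum_zero]; norm_num
  have hr'0 : ((mRookNum m (b ∘ Fin.castSucc) 0 : ℤ)) = 1 := by rw [mRookNum_zero]; norm_num
  have hr'top : ((mRookNum m (b ∘ Fin.castSucc) (n+1) : ℤ)) = 0 := by
    rw [mRookNum_of_gt m _ (by omega)]; norm_num
  set F := b ∘ Fin.castSucc with hF
  set f : ℕ → ℤ[X] := fun k => C ((mRookNum m F k : ℤ)) * Hpoly m (n + 1 - k) with hf
  have e1 : Gpoly m b
      = ∑ k ∈ Finset.range (n+1), C ((mRookNum m b (k+1) : ℤ)) * Hpoly m (n - k)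
        + Hpoly m (n+1) := by
    rw [Gpoly, Finset.sum_range_succ'
      (fun k => C ((mRookNum m b k : ℤ)) * Hpoly m (n + 1 - k)) (n+1)]
    simp only [Nat.succ_sub_succ, Nat.sub_zero, hr0, map_one, one_mul]
  have e2 : ∑ k ∈ Finset.range (n+1), C ((mRookNum m b (k+1) : ℤ)) * Hpoly m (n - k)
      = ∑ k ∈ Finset.range (n+1), C ((mRookNum m F (k+1) : ℤ)) * Hpoly m (n - k)
        + ∑ k ∈ Finset.range (n+1), C ((mRookNum m F k : ℤ))
            * (C ((b (Fin.last n) : ℤ) - m * k) * Hpoly m (n - k)) := by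
    rw [← Finset.sum_add_distrib]
    apply Finset.sum_congr rfl
    intro k _
    rw [hc1Z k, map_add, map_mul]
    ring
  have e3 : ∑ k ∈ Finset.range (n+1), C ((mRookNum m F (k+1) : ℤ)) * Hpoly m (n - k)
        + Hpoly m (n+1)
      = ∑ k ∈ Finset.range (n+1), C ((mRookNum m F k : ℤ)) * Hpoly m (n + 1 - k) := by
    have s1 := Finset.sum_range_succ' f (n+1)
    have s2 := Finset.sum_range_succ f (n+1)
    have hfk : ∀ k, f (k+1) = C ((mRookNum m F (k+1) : ℤ)) * Hpoly m (n - k) := by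
      intro k; rw [hf]; simp [Nat.succ_sub_succ]
    have hf0 : f 0 = Hpoly m (n+1) := by rw [hf]; simp [hr'0]
    have hftop : f (n+1) = 0 := by rw [hf]; simp [hr'top]
    calc ∑ k ∈ Finset.range (n+1), C ((mRookNum m F (k+1) : ℤ)) * Hpoly m (n - k)
          + Hpoly m (n+1)
        = ∑ k ∈ Finset.range (n+1), f (k+1) + f 0 := by
          rw [hf0]; congr 1; exact (Finset.sum_congr rfl (fun k _ => (hfk k).symm))
      _ = ∑ k ∈ Finset.range (n+2), f k := s1.symm
      _ = ∑ k ∈ Finset.range (n+1), f k + f (n+1) := s2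
      _ = ∑ k ∈ Finset.range (n+1), C ((mRookNum m F k : ℤ)) * Hpoly m (n + 1 - k) := by
          rw [hftop, add_zero]
  have e4 : Gpoly m b = ∑ k ∈ Finset.range (n+1), C ((mRookNum m F k : ℤ))
      * (Hpoly m (n + 1 - k) + C ((b (Fin.last n) : ℤ) - m * k) * Hpoly m (n - k)) := by
    rw [e1, e2]
    rw [add_right_comm, e3, ← Finset.sum_add_distrib]
    apply Finset.sum_congr rfl
    intro k _
    ring
  have e5 : ∀ k ∈ Finset.range (n+1),
      Hpoly m (n + 1 - k) + C ((b (Fin.last n) : ℤ) - m * k) * Hpoly m (n - k)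
      = Hpoly m (n - k) * (C (m : ℤ) * X - C (mRootVec m b (Fin.last n))) := by
    intro k hk
    rw [Finset.mem_range] at hk
    have h1 : n + 1 - k = (n - k) + 1 := by omega
    rw [h1, Hpoly, Finset.prod_range_succ, ← Hpoly]
    have h2 : ((n - k : ℕ) : ℤ) = (n : ℤ) - k := by
      rw [Nat.cast_sub (by omega)]
    have h3 : mRootVec m b (Fin.last n) = (m : ℤ) * n - b (Fin.last n) := by
      simp [mRootVec, Fin.val_last]
    rw [h2, h3, map_sub, map_mul, map_sub, map_mul, map_sub, map_mul]
    push_cast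
    ring
  rw [e4, Gpoly, Finset.sum_mul]
  apply Finset.sum_congr rfl
  intro k hk
  rw [e5 k hk]
  ring

lemma gpoly_eq (m : ℕ) (hm : 0 < m) : ∀ {n : ℕ} (b : Fin n → ℕ), IsSingletonBoard m b →
    Gpoly m b = ∏ i : Fin n, (C (m : ℤ) * X - C (mRootVec m b i)) := by
  intro n
  induction n with
  | zero =>
    intro b _
    rw [Gpoly]
    simp [mRookNum_zero, Hpoly]
  | succ n ih =>
    intro b hb
    rw [gpoly_succ hm hb, ih _ (front_singleton hb), Fin.prod_univ_castSucc]
    rfl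

lemma rk_eq_of_gpoly {m : ℕ} (hm : 0 < m) {b b' : Fin n → ℕ}
    (h : Gpoly m b = Gpoly m b') : MRookEquiv m b b' := by
  have key : ∀ k, k ≤ n → (mRookNum m b k : ℤ) = (mRookNum m b' k : ℤ) := by
    intro k
    induction k using Nat.strong_induction_on with
    | _ k ih =>
      intro hk
      have hc := congrArg (fun p => p.coeff (n - k)) h
      simp only [Gpoly, Polynomial.finset_sum_coeff, Polynomial.coeff_C_mul] at hc
      have hz : ∑ t ∈ Finset.range (n+1),
          ((mRookNum m b t : ℤ) - (mRookNum m b' t : ℤ)) * (Hpoly m (n - t)).coeff (n - k)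
          = 0 := by
        simp only [sub_mul]
        rw [Finset.sum_sub_distrib, hc, sub_self]
      have hsingle : ∑ t ∈ Finset.range (n+1),
          ((mRookNum m b t : ℤ) - (mRookNum m b' t : ℤ)) * (Hpoly m (n - t)).coeff (n - k)
          = ((mRookNum m b k : ℤ) - (mRookNum m b' k : ℤ)) * (m : ℤ) ^ (n - k) := by
        rw [Finset.sum_eq_single k]
        · rw [← hpoly_leadingCoeff m hm (n - k), Polynomial.leadingCoeff,
            hpoly_natDegree m hm (n - k)]
        · intro t ht htk
          rw [Finset.mem_range] at ht
          rcases Nat.lt_or_ge t k with hlt | hge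
          · rw [ih t hlt (by omega), sub_self, zero_mul]
          · have htgt : k < t := by omega
            have : (Hpoly m (n - t)).coeff (n - k) = 0 := by
              apply Polynomial.coeff_eq_zero_of_natDegree_lt
              rw [hpoly_natDegree m hm]
              omega
            rw [this, mul_zero]
        · intro hkk
          exact absurd (Finset.mem_range.2 (by omega)) hkk
      have := hsingle ▸ hz
      have hm' : ((m : ℤ)) ^ (n - k) ≠ 0 := by
        apply pow_ne_zero
        exact_mod_cast hm.ne'
      have := mul_eq_zero.1 this
      rcases this with h1 | h1
      · linarith [sub_eq_zero.1 h1]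
      · exact absurd h1 hm'
  intro k
  rcases le_or_gt k n with hk | hk
  · exact_mod_cast key k hk
  · rw [mRookNum_of_gt m b hk, mRookNum_of_gt m b' hk]

lemma rook_equiv_of_multiset {m : ℕ} (hm : 0 < m) {b b' : Fin n → ℕ}
    (hb : IsSingletonBoard m b) (hb' : IsSingletonBoard m b')
    (hmult : Multiset.map (mRootVec m b) Finset.univ.val
      = Multiset.map (mRootVec m b') Finset.univ.val) :
    MRookEquiv m b b' := by
  apply rk_eq_of_gpoly hm
  rw [gpoly_eq m hm b hb, gpoly_eq m hm b' hb']
  have key : ∀ (c : Fin n → ℤ), ∏ i : Fin n, (C (m : ℤ) * X - C (c i))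
      = ((Multiset.map c Finset.univ.val).map (fun v => C (m : ℤ) * X - C v)).prod := by
    intro c
    rw [Multiset.map_map]
    rfl
  rw [key, key, hmult]

end Stmt10

namespace Stmt10
variable {n : ℕ}

def mNext (m : ℕ) (v : ℤ) : ℤ := (m : ℤ) * (v / (m : ℤ) + 1)

lemma lt_mNext {m : ℕ} (hm : 0 < m) (v : ℤ) : v < mNext m v := by
  have h1 := Int.mul_ediv_add_emod v (m : ℤ)
  have h2 : v % (m : ℤ) < m := Int.emod_lt_of_pos v (by exact_mod_cast hm)
  have h3 : mNext m v = (m : ℤ) * (v / (m : ℤ)) + m := by rw [mNext]; ring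
  omega

lemma mNext_mono {m : ℕ} (hm : 0 < m) {u v : ℤ} (h : u ≤ v) : mNext m u ≤ mNext m v := by
  have h0 : u / (m:ℤ) ≤ v / (m:ℤ) := Int.ediv_le_ediv (by exact_mod_cast hm) h
  rw [mNext, mNext]
  have h1 : u / (m:ℤ) + 1 ≤ v / (m:ℤ) + 1 := by omega
  exact mul_le_mul_of_nonneg_left h1 (by positivity)

lemma le_mNext_of_le {m : ℕ} (hm : 0 < m) {u v : ℤ} (h : u ≤ v) : u ≤ mNext m v :=
  le_of_lt (lt_of_le_of_lt h (lt_mNext hm v))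

lemma mNext_calc_dvd {m : ℕ} (hm : 0 < m) {a : ℕ} (i : ℤ) (hd : m ∣ a) :
    mNext m ((m:ℤ) * i - a) = (m:ℤ) * i - a + m := by
  obtain ⟨q, rfl⟩ := hd
  have h1 : (m:ℤ) * i - (m*q : ℕ) = (m:ℤ) * (i - q) := by push_cast; ring
  rw [mNext, h1, Int.mul_ediv_cancel_left _ (by exact_mod_cast hm.ne')]
  push_cast
  ring

lemma mNext_calc_ndvd {m : ℕ} (hm : 0 < m) {a : ℕ} (i : ℤ) (hd : ¬ m ∣ a) :
    mNext m ((m:ℤ) * i - a) = (m:ℤ) * i - (m * (a / m) : ℕ) := by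
  set q := a / m with hq
  set r := a % m with hr
  have ha : a = m * q + r := (Nat.div_add_mod a m).symm
  have hr1 : 0 < r := by
    rcases Nat.eq_zero_or_pos r with h | h
    · have h2 : a % m = 0 := by rw [← hr]; exact h
      exact absurd (Nat.dvd_of_mod_eq_zero h2) hd
    · exact h
  have hr2 : r < m := Nat.mod_lt a hm
  have h1 : (m:ℤ) * i - a = ((m:ℤ) - r) + (m:ℤ) * (i - q - 1) := by
    rw [ha]; push_cast; ring
  rw [mNext, h1, Int.add_mul_ediv_left _ _ (by exact_mod_cast hm.ne' : (m:ℤ) ≠ 0)]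
  rw [Int.ediv_eq_zero_of_lt (by omega) (by omega)]
  push_cast
  ring

lemma monotone_of_adjacent {b : Fin n → ℕ} (h : ∀ i j : Fin n, (j:ℕ) = (i:ℕ)+1 → b i ≤ b j) :
    Monotone b := by
  intro i j hij
  rcases eq_or_lt_of_le hij with rfl | hlt
  · exact le_rfl
  · suffices H : ∀ d (i j : Fin n), (j:ℕ) = (i:ℕ) + 1 + d → b i ≤ b j by
      exact H ((j:ℕ) - (i:ℕ) - 1) i j (by rw [Fin.lt_def] at hlt; omega)
    intro d
    induction d with
    | zero => exact fun i j hj => h i j (by omega)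
    | succ d ih =>
      intro i j hj
      have hj0 : (j : ℕ) - 1 < n := by omega
      exact le_trans (ih i ⟨(j:ℕ)-1, hj0⟩ (by simp; omega)) (h ⟨(j:ℕ)-1, hj0⟩ j (by simp; omega))

lemma singleton_iff {m : ℕ} (hm : 0 < m) {b : Fin n → ℕ} :
    IsSingletonBoard m b ↔ ∀ i j : Fin n, (j:ℕ) = (i:ℕ)+1 →
      mRootVec m b j ≤ mNext m (mRootVec m b i) := by
  have hpair : ∀ i j : Fin n, (j:ℕ) = (i:ℕ)+1 →
      ((mRootVec m b j ≤ mNext m (mRootVec m b i)) ↔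
        (if m ∣ b i then b i ≤ b j else m * (b i / m) + m ≤ b j)) := by
    intro i j hij
    have hri : mRootVec m b i = (m:ℤ) * ((i : ℕ) : ℤ) - (b i : ℤ) := rfl
    have hrv : mRootVec m b j = (m:ℤ) * ((i : ℕ) : ℤ) + m - b j := by
      rw [mRootVec, hij]; push_cast; ring
    by_cases hd : m ∣ b i
    · rw [if_pos hd, hri, mNext_calc_dvd hm _ hd, hrv]
      constructor
      · intro hle; exact_mod_cast (by omega : ((b i : ℤ)) ≤ b j)
      · intro hle; have : ((b i : ℤ)) ≤ b j := by exact_mod_cast hle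
        omega
    · rw [if_neg hd, hri, mNext_calc_ndvd hm _ hd, hrv]
      constructor
      · intro hle
        have : ((m * (b i / m) : ℕ) : ℤ) + m ≤ b j := by omega
        exact_mod_cast this
      · intro hle
        have : ((m * (b i / m) : ℕ) : ℤ) + m ≤ b j := by exact_mod_cast hle
        omega
  constructor
  · intro hb i j hij
    rw [hpair i j hij]
    by_cases hd : m ∣ b i
    · rw [if_pos hd]; exact hb.1 (by rw [Fin.le_def]; omega)
    · rw [if_neg hd]
      have h1 := hb.2 i j hij hd
      have h2 := mult_add_le (m := m) (dvd_mFloor m (b i)) (dvd_mFloor m (b j)) h1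
      have h3 := mFloor_le m (b j)
      simp only [mFloor] at h2 h3
      omega
  · intro h
    constructor
    · apply monotone_of_adjacent
      intro i j hij
      have := (hpair i j hij).1 (h i j hij)
      by_cases hd : m ∣ b i
      · rwa [if_pos hd] at this
      · rw [if_neg hd] at this
        have h5 := Nat.div_add_mod (b i) m
        have h6 := Nat.mod_lt (b i) hm
        omega
    · intro i j hij hd
      have := (hpair i j hij).1 (h i j hij)
      rw [if_neg hd] at this
      have h4 : b i / m + 1 ≤ b j / m := (Nat.le_div_iff_mul_le hm).2 (by
        rw [Nat.add_mul, Nat.one_mul, Nat.mul_comm]; omega)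
      rw [mFloor, mFloor]
      have h5 : m * (b i / m) + m ≤ m * (b j / m) := by
        calc m * (b i / m) + m = m * (b i / m + 1) := by ring
          _ ≤ m * (b j / m) := Nat.mul_le_mul_left m h4
      omega

end Stmt10

namespace Stmt10
variable {n : ℕ}

lemma sort_aux (m : ℕ) (hm : 0 < m) (B : SingletonBoard m n)
    (M : ℤ) (j : Fin n) (L : ℤ)
    (hmax : ∀ i, mRootVec m B.1 i ≤ M)
    (hj : mRootVec m B.1 j = M)
    (hL : ∀ t, L ≤ mRootVec m B.1 t) :
    ∀ (N : ℕ) (b' : Fin n → ℕ) (hb' : IsSingletonBoard m b'),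
      (Multiset.map (mRootVec m b') Finset.univ.val
        = Multiset.map (mRootVec m B.1) Finset.univ.val) →
      (∀ i : Fin n, i ≤ j → b' i = B.1 i) →
      ((∑ t : Fin n, ((t : ℕ) : ℤ) * (mRootVec m b' t - L)).toNat ≤ N) →
      (∀ hE : MRookEquiv m b' B.1,
        (mRookEquivGraph m B).Reachable ⟨B, fun _ => rfl⟩ ⟨⟨b', hb'⟩, hE⟩) →
      ∃ B' : {C : SingletonBoard m n // MRookEquiv m C.1 B.1},
        (mRookEquivGraph m B).Reachable ⟨B, fun _ => rfl⟩ B' ∧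
        (∀ i ≤ j, mRootVec m B'.1.1 i = mRootVec m B.1 i) ∧
        (∀ i₁ i₂ : Fin n, j ≤ i₁ → i₁ ≤ i₂ →
          mRootVec m B'.1.1 i₂ ≤ mRootVec m B'.1.1 i₁) := by
  classical
  have hLc : ∀ (c : Fin n → ℕ), Multiset.map (mRootVec m c) Finset.univ.val
      = Multiset.map (mRootVec m B.1) Finset.univ.val → ∀ t, L ≤ mRootVec m c t := by
    intro c hc t
    have h1 : mRootVec m c t ∈ Multiset.map (mRootVec m c) Finset.univ.val :=
      Multiset.mem_map_of_mem _ (Finset.mem_univ t)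
    rw [hc] at h1
    obtain ⟨s, _, hs⟩ := Multiset.mem_map.1 h1
    rw [← hs]; exact hL s
  have hMc : ∀ (c : Fin n → ℕ), Multiset.map (mRootVec m c) Finset.univ.val
      = Multiset.map (mRootVec m B.1) Finset.univ.val → ∀ t, mRootVec m c t ≤ M := by
    intro c hc t
    have h1 : mRootVec m c t ∈ Multiset.map (mRootVec m c) Finset.univ.val :=
      Multiset.mem_map_of_mem _ (Finset.mem_univ t)
    rw [hc] at h1
    obtain ⟨s, _, hs⟩ := Multiset.mem_map.1 h1
    rw [← hs]; exact hmax s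
  intro N
  induction N using Nat.strong_induction_on with
  | _ N IH =>
  intro b' hb' hmult hagree hphi hreach
  have hE' : MRookEquiv m b' B.1 := rook_equiv_of_multiset hm hb' B.2 hmult
  have hxj : mRootVec m b' j = M := by
    have h : mRootVec m b' j = mRootVec m B.1 j := by
      rw [mRootVec, mRootVec, hagree j le_rfl]
    rw [h, hj]
  set Dset : Finset (Fin n) := Finset.univ.filter
    (fun t => j ≤ t ∧ ∃ u : Fin n, t < u ∧ mRootVec m b' t < mRootVec m b' u) with hDset
  by_cases hD : Dset.Nonempty
  swap
  · -- done : the tail is weakly decreasing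
    refine ⟨⟨⟨b', hb'⟩, hE'⟩, hreach hE', ?_, ?_⟩
    · intro i hi
      show (m : ℤ) * ((i : ℕ) : ℤ) - (b' i : ℤ) = (m : ℤ) * ((i : ℕ) : ℤ) - (B.1 i : ℤ)
      rw [hagree i hi]
    · intro i₁ i₂ h1 h2
      show mRootVec m b' i₂ ≤ mRootVec m b' i₁
      rcases eq_or_lt_of_le h2 with rfl | hlt
      · exact le_rfl
      · by_contra hcon
        push_neg at hcon
        exact hD ⟨i₁, by
          rw [hDset, Finset.mem_filter]
          exact ⟨Finset.mem_univ _, h1, i₂, hlt, hcon⟩⟩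
  · -- find the swap
    obtain ⟨i, hi⟩ : ∃ i, i = Dset.min' hD := ⟨_, rfl⟩
    have hiD : i ∈ Dset := by rw [hi]; exact Finset.min'_mem Dset hD
    rw [hDset, Finset.mem_filter] at hiD
    obtain ⟨-, hji, u0, hu0, hu0'⟩ := hiD
    have hij : j < i := by
      rcases eq_or_lt_of_le hji with rfl | h
      · rw [hxj] at hu0'
        exact absurd (hMc b' hmult u0) (by omega)
      · exact h
    set Qset : Finset (Fin n) := Finset.univ.filter
      (fun u => i < u ∧ mRootVec m b' i < mRootVec m b' u) with hQset
    have hQne : Qset.Nonempty := ⟨u0, by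
      rw [hQset, Finset.mem_filter]; exact ⟨Finset.mem_univ _, hu0, hu0'⟩⟩
    obtain ⟨q, hq⟩ : ∃ q, q = Qset.max' hQne := ⟨_, rfl⟩
    have hqQ : q ∈ Qset := by rw [hq]; exact Finset.max'_mem Qset hQne
    rw [hQset, Finset.mem_filter] at hqQ
    obtain ⟨-, hiq, hxy⟩ := hqQ
    set x : ℤ := mRootVec m b' i with hxeq
    set y : ℤ := mRootVec m b' q with hyeq
    have hqmax : ∀ u : Fin n, q < u → mRootVec m b' u ≤ x := by
      intro u hu
      by_contra hcon
      push_neg at hcon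
      have hmem : u ∈ Qset := by
        rw [hQset, Finset.mem_filter]
        exact ⟨Finset.mem_univ _, lt_trans hiq hu, hcon⟩
      have := Finset.le_max' Qset u hmem
      rw [← hq] at this
      exact absurd this (not_le.2 hu)
    have hipos : 0 < (i : ℕ) := by
      rw [Fin.lt_def] at hij; omega
    set pred : Fin n := ⟨(i : ℕ) - 1, by omega⟩ with hpred
    have hpredi : pred < i := by rw [Fin.lt_def]; simp only [hpred]; omega
    have hjpred : j ≤ pred := by
      rw [Fin.le_def]; rw [Fin.lt_def] at hij; simp only [hpred]; omega
    have hpredD : pred ∉ Dset := by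
      intro hmem
      have h1 := Finset.min'_le Dset pred hmem
      rw [← hi] at h1
      exact absurd h1 (not_le.2 hpredi)
    have hpreddom : ∀ u : Fin n, pred < u → mRootVec m b' u ≤ mRootVec m b' pred := by
      intro u hu
      by_contra hcon
      push_neg at hcon
      exact hpredD (by
        rw [hDset, Finset.mem_filter]
        exact ⟨Finset.mem_univ _, hjpred, u, hu, hcon⟩)
    have hy_le_pred : y ≤ mRootVec m b' pred :=
      hpreddom q (lt_trans hpredi hiq)
    -- arithmetic on heights
    have hxdef : x = (m : ℤ) * ((i : ℕ) : ℤ) - b' i := rfl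
    have hydef : y = (m : ℤ) * ((q : ℕ) : ℤ) - b' q := rfl
    have hpredbd : mRootVec m b' pred ≤ (m : ℤ) * (((i : ℕ) : ℤ) - 1) := by
      have h1 : mRootVec m b' pred = (m : ℤ) * ((pred : ℕ) : ℤ) - b' pred := rfl
      have h2 : ((pred : ℕ) : ℤ) = ((i : ℕ) : ℤ) - 1 := by
        simp only [hpred]; omega
      rw [h1, h2]
      have h3 : (0 : ℤ) ≤ b' pred := by positivity
      omega
    set k : ℕ := (y - x).toNat with hkdef
    have hky : (k : ℤ) = y - x := Int.toNat_of_nonneg (by omega)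
    have hkpos : 0 < k := by
      have h : (0 : ℤ) < k := by omega
      exact_mod_cast h
    have hyle : y ≤ (m : ℤ) * ((i : ℕ) : ℤ) := by
      have h1 := le_trans hy_le_pred hpredbd
      have hm' : (1 : ℤ) ≤ m := by exact_mod_cast hm
      nlinarith
    have hkle : k ≤ b' i := by
      have h : (k : ℤ) ≤ b' i := by
        rw [hky, hxdef]
        omega
      exact_mod_cast h
    set b'' : Fin n → ℕ := fun t => if t = i then b' i - k else if t = q then b' q + k else b' t
      with hb''def
    have hne_iq : i ≠ q := Fin.ne_of_lt hiq
    have hb''i : b'' i = b' i - k := by rw [hb''def]; simp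
    have hb''q : b'' q = b' q + k := by rw [hb''def]; simp [hne_iq.symm]
    have hb''other : ∀ t, t ≠ i → t ≠ q → b'' t = b' t := by
      intro t h1 h2; rw [hb''def]; simp [h1, h2]
    have hrv'' : ∀ t : Fin n, mRootVec m b'' t
        = if t = i then y else if t = q then x else mRootVec m b' t := by
      intro t
      have h0 : mRootVec m b'' t = (m : ℤ) * ((t : ℕ) : ℤ) - b'' t := rfl
      by_cases h1 : t = i
      · rw [if_pos h1, h0, h1, hb''i, Nat.cast_sub hkle]
        linarith [hxdef, hky]
      · by_cases h2 : t = q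
        · rw [if_neg h1, if_pos h2, h0, h2, hb''q, Nat.cast_add]
          linarith [hydef, hky]
        · rw [if_neg h1, if_neg h2, h0, hb''other t h1 h2]
          rfl
    -- singletonness of b''
    have hcond' := (singleton_iff hm).1 hb'
    have hb'' : IsSingletonBoard m b'' := by
      rw [singleton_iff hm]
      intro t t' ht'
      rw [hrv'' t, hrv'' t']
      by_cases h1 : t = i
      · rw [if_pos h1]
        rw [h1] at ht'
        have h3 : t' ≠ i := by intro h; rw [h] at ht'; omega
        by_cases h2 : t' = q
        · rw [if_neg h3, if_pos h2]
          exact le_mNext_of_le hm (le_of_lt hxy)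
        · rw [if_neg h3, if_neg h2]
          exact le_trans (hcond' i t' ht') (mNext_mono hm (le_of_lt hxy))
      · by_cases h2 : t = q
        · rw [if_neg h1, if_pos h2]
          rw [h2] at ht'
          have h3 : t' ≠ i := by
            intro h; rw [h] at ht'; rw [Fin.lt_def] at hiq; omega
          have h4 : t' ≠ q := by intro h; rw [h] at ht'; omega
          rw [if_neg h3, if_neg h4]
          refine le_mNext_of_le hm (hqmax t' ?_)
          rw [Fin.lt_def]; omega
        · rw [if_neg h1, if_neg h2]
          by_cases h3 : t' = i
          · rw [if_pos h3]
            have h5 : t = pred := by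
              apply Fin.ext
              have h6 : (t' : ℕ) = (i : ℕ) := by rw [h3]
              simp only [hpred]
              omega
            rw [h5]
            exact le_mNext_of_le hm hy_le_pred
          · by_cases h4 : t' = q
            · rw [if_neg h3, if_pos h4]
              have h7 := hcond' t t' ht'
              rw [h4] at h7
              exact le_trans (le_of_lt hxy) h7
            · rw [if_neg h3, if_neg h4]
              exact hcond' t t' ht'
    -- multiset invariance
    have hswap : mRootVec m b'' = (mRootVec m b') ∘ (Equiv.swap i q) := by
      funext t
      rw [hrv'' t]
      by_cases h1 : t = i
      · rw [h1]; simp [Equiv.swap_apply_left, hyeq]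
      · by_cases h2 : t = q
        · rw [h2]; simp [Equiv.swap_apply_right, hne_iq.symm, hxeq]
        · simp [Equiv.swap_apply_of_ne_of_ne h1 h2, h1, h2]
    have hmult'' : Multiset.map (mRootVec m b'') Finset.univ.val
        = Multiset.map (mRootVec m B.1) Finset.univ.val := by
      rw [hswap]
      have h1 : Multiset.map ((mRootVec m b') ∘ (Equiv.swap i q)) Finset.univ.val
          = Multiset.map (mRootVec m b') (Multiset.map (⇑(Equiv.swap i q)) Finset.univ.val) := by
        rw [Multiset.map_map]
      have h2 : Multiset.map (⇑(Equiv.swap i q)) Finset.univ.val = Finset.univ.val := by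
        have h3 := congrArg Finset.val (Finset.map_univ_equiv (Equiv.swap i q))
        rw [Finset.map_val] at h3
        exact h3
      rw [h1, h2, hmult]
    have hE'' : MRookEquiv m b'' B.1 := rook_equiv_of_multiset hm hb'' B.2 hmult''
    -- agreement
    have hagree'' : ∀ t : Fin n, t ≤ j → b'' t = B.1 t := by
      intro t ht
      have h1 : t ≠ i := by
        intro h; rw [h] at ht
        exact absurd (lt_of_lt_of_le hij ht) (lt_irrefl j)
      have h2 : t ≠ q := by
        intro h; rw [h] at ht
        exact absurd (lt_of_lt_of_le (lt_trans hij hiq) ht) (lt_irrefl j)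
      rw [hb''other t h1 h2, hagree t ht]
    -- potential decrease
    have hphidiff : (∑ t : Fin n, ((t : ℕ) : ℤ) * (mRootVec m b' t - L))
        - (∑ t : Fin n, ((t : ℕ) : ℤ) * (mRootVec m b'' t - L))
        = (((q : ℕ) : ℤ) - ((i : ℕ) : ℤ)) * (y - x) := by
      rw [← Finset.sum_sub_distrib]
      rw [← Finset.sum_subset (Finset.subset_univ ({i, q} : Finset (Fin n)))
        (by
          intro t _ ht
          simp only [Finset.mem_insert, Finset.mem_singleton] at ht
          push_neg at ht
          rw [hrv'' t, if_neg ht.1, if_neg ht.2]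
          ring)]
      rw [Finset.sum_pair hne_iq, hrv'' i, hrv'' q]
      rw [if_pos rfl, if_neg hne_iq.symm, if_pos rfl]
      ring
    have hpos : 0 < (((q : ℕ) : ℤ) - ((i : ℕ) : ℤ)) * (y - x) := by
      apply mul_pos
      · rw [Fin.lt_def] at hiq
        omega
      · omega
    have hnn : 0 ≤ ∑ t : Fin n, ((t : ℕ) : ℤ) * (mRootVec m b'' t - L) := by
      apply Finset.sum_nonneg
      intro t _
      apply mul_nonneg
      · positivity
      · have := hLc b'' hmult'' t
        omega
    -- reachability step
    have hbne : b' ≠ b'' := by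
      intro h
      have h1 := congrFun h i
      rw [hb''i] at h1
      omega
    have hmoves : MovesSquares b' b'' := by
      refine ⟨i, q, k, hne_iq, hkpos, ?_, ?_, ?_⟩
      · rw [hb''i]; omega
      · rw [hb''q]
      · intro l h1 h2
        rw [hb''other l h1 h2]
    have hadj : (mRookEquivGraph m B).Adj ⟨⟨b', hb'⟩, hE'⟩ ⟨⟨b'', hb''⟩, hE''⟩ := by
      rw [mRookEquivGraph, SimpleGraph.fromRel_adj]
      constructor
      · intro h
        exact hbne (congrArg (fun v => v.1.1) h)
      · exact Or.inl hmoves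
    have hreach'' : ∀ hE : MRookEquiv m b'' B.1,
        (mRookEquivGraph m B).Reachable ⟨B, fun _ => rfl⟩ ⟨⟨b'', hb''⟩, hE⟩ := by
      intro hE
      exact (hreach hE').trans hadj.reachable
    -- apply induction
    have hlt : (∑ t : Fin n, ((t : ℕ) : ℤ) * (mRootVec m b'' t - L)).toNat < N := by
      omega
    exact IH _ hlt b'' hb'' hmult'' hagree'' le_rfl hreach''

end Stmt10


/-- every singleton board is connected by a path in its `m`-level
rook equivalence graph to a singleton board whose `m`-level root vector agrees
with the original in the first `j` positions (where position `j`, 0-indexed,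
holds the leftmost maximum entry `M`) and is weakly decreasing from position `j`
on. -/
theorem stmt10 (m : ℕ) (hm : 0 < m) {n : ℕ} (B : SingletonBoard m n)
    (M : ℤ) (j : Fin n)
    (hmax : ∀ i, mRootVec m B.1 i ≤ M)
    (hj : mRootVec m B.1 j = M)
    (hfirst : ∀ i < j, mRootVec m B.1 i ≠ M) :
    ∃ B' : {C : SingletonBoard m n // MRookEquiv m C.1 B.1},
      (mRookEquivGraph m B).Reachable ⟨B, fun _ => rfl⟩ B' ∧
      (∀ i ≤ j, mRootVec m B'.1.1 i = mRootVec m B.1 i) ∧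
      (∀ i₁ i₂ : Fin n, j ≤ i₁ → i₁ ≤ i₂ →
        mRootVec m B'.1.1 i₂ ≤ mRootVec m B'.1.1 i₁) := by
  classical
  exact Stmt10.sort_aux m hm B M j
    (Finset.univ.inf' ⟨j, Finset.mem_univ j⟩ (mRootVec m B.1)) hmax hj
    (fun t => Finset.inf'_le _ (Finset.mem_univ t))
    ((∑ t : Fin n, ((t : ℕ) : ℤ) * (mRootVec m B.1 t
      - Finset.univ.inf' ⟨j, Finset.mem_univ j⟩ (mRootVec m B.1))).toNat)
    B.1 B.2 rfl (fun _ _ => rfl) le_rfl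
    (fun hE => SimpleGraph.Reachable.refl _)
end

section
/- (Goldman–Joichi–White factorization) If B = (b_1,…,b_n) is a Ferrers board with n columns, then, as polynomials in x (equivalently, for every integer x), ∑_{k=0}^{n} r_k(B) · x↓_{n−k} = ∏_{i=1}^{n} (x + b_i − (i−1)), where x↓_j = x(x−1)⋯(x−j+1) is the j-th falling factorial (with x↓_0 = 1). -/
/-- A (non-attacking) rook placement on the board with column heights `b`:
a set of cells (column, row) inside the board, no two sharing a column or a row.
Cells are 0-indexed: cell `(i, j)` lies in the board iff `j < b i`. -/
def IsRookPlacement {n : ℕ} (b : Fin n → ℕ) (P : Finset (Fin n × ℕ)) : Prop :=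
  (∀ c ∈ P, c.2 < b c.1) ∧
  ∀ c ∈ P, ∀ d ∈ P, c ≠ d → c.1 ≠ d.1 ∧ c.2 ≠ d.2

/-- The `k`-th rook number of the board `b`: the number of placements of `k`
non-attacking rooks on `b`. -/
noncomputable def rookNum {n : ℕ} (b : Fin n → ℕ) (k : ℕ) : ℕ :=
  Set.ncard {P : Finset (Fin n × ℕ) | IsRookPlacement b P ∧ P.card = k}

/-- Two boards are rook equivalent if all their rook numbers agree. -/
def RookEquiv {n₁ n₂ : ℕ} (b₁ : Fin n₁ → ℕ) (b₂ : Fin n₂ → ℕ) : Prop :=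
  ∀ k, rookNum b₁ k = rookNum b₂ k

/-- The root vector of a board: the (0-indexed) `i`-th entry is `i - b i`
(1-indexed: `(i-1) - b_i`). -/
def rootVec {n : ℕ} (b : Fin n → ℕ) : Fin n → ℤ := fun i => (i : ℤ) - (b i : ℤ)

/-- A Ferrers board with `n` columns: a weakly increasing sequence of column heights. -/
def FerrersBoard (n : ℕ) : Type := {b : Fin n → ℕ // Monotone b}

/-- The rook equivalence graph of the equivalence class of `B`: vertices are the
Ferrers boards with `n` columns rook equivalent to `B`; two distinct boards are
adjacent when one is obtained from the other by moving squares out of one column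
into a single other column. -/
def rookEquivGraph {n : ℕ} (B : FerrersBoard n) :
    SimpleGraph {C : FerrersBoard n // RookEquiv C.1 B.1} :=
  SimpleGraph.fromRel fun C D => MovesSquares C.1.1 D.1.1

/-- `entryCount b k` is `v_k`, the number of entries of the root vector of `b`
equal to `k`. -/
def entryCount {n : ℕ} (b : Fin n → ℕ) (k : ℕ) : ℕ :=
  (Finset.univ.filter fun l => rootVec b l = (k : ℤ)).card

/-- The `j`-th falling factorial `x↓_j = x(x-1)⋯(x-(j-1))`, with `x↓_0 = 1`. -/
def fallFact (x : ℤ) (j : ℕ) : ℤ := ∏ i ∈ Finset.range j, (x - (i : ℤ))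

namespace GJW

open Finset

variable {n : ℕ}

open Classical in
noncomputable def RPf (b : Fin n → ℕ) (k : ℕ) : Finset (Finset (Fin n × ℕ)) :=
  ((Finset.univ ×ˢ Finset.range (Finset.univ.sup b)).powerset).filter
    fun P => IsRookPlacement b P ∧ P.card = k

lemma mem_RPf {b : Fin n → ℕ} {k : ℕ} {P : Finset (Fin n × ℕ)} :
    P ∈ RPf b k ↔ IsRookPlacement b P ∧ P.card = k := by
  classical
  simp only [RPf, mem_filter, mem_powerset]
  refine ⟨fun h => h.2, fun h => ⟨?_, h⟩⟩
  intro c hc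
  simp only [mem_product, mem_univ, true_and, mem_range]
  exact lt_of_lt_of_le (h.1.1 c hc) (le_sup (mem_univ c.1))

lemma rookNum_eq (b : Fin n → ℕ) (k : ℕ) : rookNum b k = (RPf b k).card := by
  have h : {P : Finset (Fin n × ℕ) | IsRookPlacement b P ∧ P.card = k} = ↑(RPf b k) := by
    ext P; simp [mem_RPf]
  rw [rookNum, h, Set.ncard_coe_finset]

lemma isRP_empty (b : Fin n → ℕ) : IsRookPlacement b ∅ := by
  constructor <;> intro c hc <;> simp at hc

lemma rookNum_zero (b : Fin n → ℕ) : rookNum b 0 = 1 := by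
  rw [rookNum_eq]
  have : RPf b 0 = {∅} := by
    ext P
    simp only [mem_RPf, Finset.card_eq_zero, mem_singleton]
    exact ⟨fun h => h.2, fun h => ⟨h ▸ isRP_empty b, h⟩⟩
  rw [this, card_singleton]

lemma fst_injOn {b : Fin n → ℕ} {P : Finset (Fin n × ℕ)} (h : IsRookPlacement b P) :
    Set.InjOn Prod.fst (P : Set (Fin n × ℕ)) := by
  intro c hc d hd hcd
  by_contra hne
  exact (h.2 c hc d hd hne).1 hcd

lemma snd_injOn {b : Fin n → ℕ} {P : Finset (Fin n × ℕ)} (h : IsRookPlacement b P) :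
    Set.InjOn Prod.snd (P : Set (Fin n × ℕ)) := by
  intro c hc d hd hcd
  by_contra hne
  exact (h.2 c hc d hd hne).2 hcd

lemma rp_card_le {b : Fin n → ℕ} {P : Finset (Fin n × ℕ)} (h : IsRookPlacement b P) :
    P.card ≤ n := by
  calc P.card = (P.image Prod.fst).card := (card_image_of_injOn (fst_injOn h)).symm
    _ ≤ (Finset.univ : Finset (Fin n)).card := card_le_card (subset_univ _)
    _ = n := by simp

lemma rookNum_of_lt (b : Fin n → ℕ) {k : ℕ} (h : n < k) : rookNum b k = 0 := by
  rw [rookNum_eq]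
  have : RPf b k = ∅ := by
    rw [eq_empty_iff_forall_notMem]
    intro P hP
    rw [mem_RPf] at hP
    have := rp_card_le hP.1
    omega
  simp [this]

/-! ### embedding and stripping -/

def emb (Q : Finset (Fin n × ℕ)) : Finset (Fin (n + 1) × ℕ) :=
  Q.image fun c => (Fin.castSucc c.1, c.2)

lemma mem_emb {Q : Finset (Fin n × ℕ)} {p : Fin (n + 1) × ℕ} :
    p ∈ emb Q ↔ ∃ c ∈ Q, (Fin.castSucc c.1, c.2) = p := by simp [emb]

lemma card_emb (Q : Finset (Fin n × ℕ)) : (emb Q).card = Q.card := by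
  apply card_image_of_injective
  intro c d h
  simp only [Prod.mk.injEq, Fin.castSucc_inj] at h
  exact Prod.ext h.1 h.2

noncomputable def strip (P : Finset (Fin (n + 1) × ℕ)) : Finset (Fin n × ℕ) :=
  (P.filter fun c => c.1 ≠ Fin.last n).attach.image fun c =>
    ((c.1.1).castPred ((Finset.mem_filter.mp c.2).2), c.1.2)

lemma mem_strip {P : Finset (Fin (n + 1) × ℕ)} {j : Fin n} {r : ℕ} :
    (j, r) ∈ strip P ↔ (Fin.castSucc j, r) ∈ P := by
  constructor
  · intro h
    simp only [strip, mem_image, mem_attach, true_and, Subtype.exists] at h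
    obtain ⟨c, hc, heq⟩ := h
    rw [Prod.mk.injEq] at heq
    have h1 : Fin.castSucc j = c.1 := by rw [← heq.1, Fin.castSucc_castPred]
    have h2 := (Finset.mem_filter.mp hc).1
    rw [h1, ← heq.2]
    exact h2
  · intro h
    have hne : (Fin.castSucc j : Fin (n + 1)) ≠ Fin.last n := (Fin.castSucc_lt_last j).ne
    simp only [strip, mem_image, mem_attach, true_and, Subtype.exists]
    exact ⟨(Fin.castSucc j, r), Finset.mem_filter.mpr ⟨h, hne⟩, by simp⟩

lemma strip_emb (Q : Finset (Fin n × ℕ)) : strip (emb Q) = Q := by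
  ext ⟨j, r⟩
  rw [mem_strip, mem_emb]
  constructor
  · rintro ⟨c, hc, heq⟩
    rw [Prod.mk.injEq, Fin.castSucc_inj] at heq
    have hcp : c = (j, r) := Prod.ext_iff.mpr heq
    exact hcp ▸ hc
  · intro h
    exact ⟨(j, r), h, rfl⟩

lemma emb_strip {P : Finset (Fin (n + 1) × ℕ)} (h : ∀ c ∈ P, c.1 ≠ Fin.last n) :
    emb (strip P) = P := by
  ext ⟨i, r⟩
  rw [mem_emb]
  constructor
  · rintro ⟨⟨j, s⟩, hc, heq⟩
    rw [mem_strip] at hc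
    rwa [heq] at hc
  · intro hi
    have hne := h (i, r) hi
    refine ⟨(i.castPred hne, r), ?_, ?_⟩
    · rw [mem_strip, Fin.castSucc_castPred]; exact hi
    · simp [Fin.castSucc_castPred]

lemma isRP_emb {b : Fin (n + 1) → ℕ} {Q : Finset (Fin n × ℕ)} :
    IsRookPlacement b (emb Q) ↔ IsRookPlacement (b ∘ Fin.castSucc) Q := by
  constructor
  · intro h
    constructor
    · intro c hc
      exact h.1 _ (mem_emb.mpr ⟨c, hc, rfl⟩)
    · intro c hc d hd hne
      have hne' : ((Fin.castSucc c.1, c.2) : Fin (n + 1) × ℕ) ≠ (Fin.castSucc d.1, d.2) := by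
        intro heq
        rw [Prod.mk.injEq, Fin.castSucc_inj] at heq
        exact hne (Prod.ext heq.1 heq.2)
      have := h.2 _ (mem_emb.mpr ⟨c, hc, rfl⟩) _ (mem_emb.mpr ⟨d, hd, rfl⟩) hne'
      exact ⟨fun hh => this.1 (by rw [hh]), this.2⟩
  · intro h
    constructor
    · intro c hc
      rw [mem_emb] at hc
      obtain ⟨d, hd, rfl⟩ := hc
      exact h.1 d hd
    · intro c hc d hd hne
      rw [mem_emb] at hc hd
      obtain ⟨c', hc', rfl⟩ := hc
      obtain ⟨d', hd', rfl⟩ := hd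
      have hne' : c' ≠ d' := fun hh => hne (by rw [hh])
      have := h.2 c' hc' d' hd' hne'
      exact ⟨by simpa [Fin.castSucc_inj] using this.1, this.2⟩

lemma isRP_subset {m : ℕ} {b : Fin m → ℕ} {P Q : Finset (Fin m × ℕ)}
    (h : IsRookPlacement b P) (hQ : Q ⊆ P) : IsRookPlacement b Q :=
  ⟨fun c hc => h.1 c (hQ hc), fun c hc d hd => h.2 c (hQ hc) d (hQ hd)⟩

lemma rows_subset {b : Fin (n + 1) → ℕ} (hb : Monotone b) {Q : Finset (Fin n × ℕ)} {k : ℕ}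
    (hQ : Q ∈ RPf (b ∘ Fin.castSucc) k) :
    Q.image Prod.snd ⊆ range (b (Fin.last n)) := by
  intro r hr
  rw [mem_image] at hr
  obtain ⟨c, hc, rfl⟩ := hr
  rw [mem_range]
  exact lt_of_lt_of_le ((mem_RPf.mp hQ).1.1 c hc) (hb (Fin.le_last _))

lemma rows_card {b : Fin (n + 1) → ℕ} {Q : Finset (Fin n × ℕ)} {k : ℕ}
    (hQ : Q ∈ RPf (b ∘ Fin.castSucc) k) : (Q.image Prod.snd).card = k := by
  rw [card_image_of_injOn (snd_injOn (mem_RPf.mp hQ).1)]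
  exact (mem_RPf.mp hQ).2

lemma strip_spec {b : Fin (n + 1) → ℕ} {P : Finset (Fin (n + 1) × ℕ)}
    (hP : IsRookPlacement b P) {r : ℕ} (hr : (Fin.last n, r) ∈ P) :
    emb (strip P) = P.erase (Fin.last n, r) := by
  have hfst : ∀ c ∈ P.erase (Fin.last n, r), c.1 ≠ Fin.last n := by
    rintro ⟨i, s⟩ hc hi
    rw [mem_erase] at hc
    subst hi
    exact (hP.2 _ hc.2 (Fin.last n, r) hr hc.1).1 rfl
  have hstrip : strip P = strip (P.erase (Fin.last n, r)) := by
    ext ⟨j, s⟩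
    rw [mem_strip, mem_strip, mem_erase]
    constructor
    · intro h
      refine ⟨?_, h⟩
      intro heq
      rw [Prod.mk.injEq] at heq
      exact (Fin.castSucc_lt_last j).ne heq.1
    · exact And.right
  rw [hstrip, emb_strip hfst]

lemma rookNum_nonzero_le {b : Fin (n + 1) → ℕ} (hb : Monotone b) {k : ℕ}
    (h : rookNum (b ∘ Fin.castSucc) k ≠ 0) : k ≤ b (Fin.last n) := by
  rw [rookNum_eq] at h
  obtain ⟨Q, hQ⟩ := Finset.card_ne_zero.mp h
  calc k = (Q.image Prod.snd).card := (rows_card hQ).symm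
    _ ≤ (range (b (Fin.last n))).card := card_le_card (rows_subset hb hQ)
    _ = b (Fin.last n) := card_range _

lemma rookNum_succ_nat {b : Fin (n + 1) → ℕ} (hb : Monotone b) (k : ℕ) :
    rookNum b (k + 1) =
      rookNum (b ∘ Fin.castSucc) (k + 1) +
        (b (Fin.last n) - k) * rookNum (b ∘ Fin.castSucc) k := by
  classical
  set b' := b ∘ Fin.castSucc with hb'
  set L := Fin.last n with hL
  rw [rookNum_eq, rookNum_eq, rookNum_eq]
  rw [← card_filter_add_card_filter_not (s := RPf b (k + 1))
    (p := fun P => ∀ r, (L, r) ∉ P)]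
  congr 1
  · -- no rook in last column
    symm
    apply Finset.card_bij (fun Q _ => emb Q)
    · intro Q hQ
      rw [mem_filter]
      obtain ⟨hQ1, hQ2⟩ := mem_RPf.mp hQ
      refine ⟨mem_RPf.mpr ⟨isRP_emb.mpr hQ1, by rw [card_emb]; exact hQ2⟩, ?_⟩
      intro r hr
      rw [mem_emb] at hr
      obtain ⟨c, _, heq⟩ := hr
      rw [Prod.mk.injEq] at heq
      exact (Fin.castSucc_lt_last c.1).ne heq.1
    · intro Q₁ h₁ Q₂ h₂ heq
      have := congrArg strip heq
      rwa [strip_emb, strip_emb] at this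
    · intro P hP
      rw [mem_filter] at hP
      obtain ⟨hP1, hP2⟩ := hP
      obtain ⟨hP3, hP4⟩ := mem_RPf.mp hP1
      have hfst : ∀ c ∈ P, c.1 ≠ L := by
        rintro ⟨i, s⟩ hc hi
        subst hi
        exact hP2 s hc
      have hes := emb_strip hfst
      refine ⟨strip P, mem_RPf.mpr ⟨?_, ?_⟩, hes⟩
      · exact isRP_emb.mp (by rw [hes]; exact hP3)
      · rw [← card_emb, hes]; exact hP4
  · -- rook in last column
    have hmap : ∀ P ∈ (RPf b (k + 1)).filter (fun P => ¬ ∀ r, (L, r) ∉ P),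
        strip P ∈ RPf b' k := by
      intro P hP
      rw [mem_filter] at hP
      obtain ⟨hP1, hP2⟩ := hP
      obtain ⟨hP3, hP4⟩ := mem_RPf.mp hP1
      push_neg at hP2
      obtain ⟨r, hr⟩ := hP2
      have hss := strip_spec hP3 hr
      refine mem_RPf.mpr ⟨?_, ?_⟩
      · exact isRP_emb.mp (isRP_subset hP3 (by rw [hss]; exact erase_subset _ _))
      · rw [← card_emb, hss, card_erase_of_mem hr, hP4]
        omega
    rw [card_eq_sum_card_fiberwise hmap]
    have hfiber : ∀ Q ∈ RPf b' k,
        (((RPf b (k + 1)).filter (fun P => ¬ ∀ r, (L, r) ∉ P)).filter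
          (fun P => strip P = Q)).card = b (Fin.last n) - k := by
      intro Q hQ
      obtain ⟨hQ1, hQ2⟩ := mem_RPf.mp hQ
      have hcard : (range (b L) \ Q.image Prod.snd).card = b (Fin.last n) - k := by
        rw [card_sdiff_of_subset (rows_subset hb hQ), card_range, rows_card hQ]
      rw [← hcard]
      symm
      apply Finset.card_bij (fun r _ => insert (L, r) (emb Q))
      · intro r hr
        rw [mem_sdiff, mem_range] at hr
        obtain ⟨hr1, hr2⟩ := hr
        have hnotmem : (L, r) ∉ emb Q := by
          intro hm
          rw [mem_emb] at hm
          obtain ⟨c, _, heq⟩ := hm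
          rw [Prod.mk.injEq] at heq
          exact (Fin.castSucc_lt_last c.1).ne heq.1
        have hRP : IsRookPlacement b (insert (L, r) (emb Q)) := by
          constructor
          · intro c hc
            rw [mem_insert] at hc
            rcases hc with rfl | hc
            · exact hr1
            · exact (isRP_emb.mpr hQ1).1 c hc
          · intro c hc d hd hne
            rw [mem_insert] at hc hd
            have key : ∀ e ∈ emb Q, (L, r).1 ≠ e.1 ∧ (L, r).2 ≠ e.2 := by
              intro e he
              rw [mem_emb] at he
              obtain ⟨c', hc', rfl⟩ := he
              constructor
              · exact fun hh => (Fin.castSucc_lt_last c'.1).ne hh.symm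
              · intro hh
                exact hr2 (mem_image.mpr ⟨c', hc', hh.symm⟩)
            rcases hc with rfl | hc
            · rcases hd with rfl | hd
              · exact absurd rfl hne
              · exact key d hd
            · rcases hd with rfl | hd
              · have := key c hc
                exact ⟨this.1.symm, this.2.symm⟩
              · exact (isRP_emb.mpr hQ1).2 c hc d hd hne
        refine mem_filter.mpr ⟨mem_filter.mpr ⟨mem_RPf.mpr ⟨hRP, ?_⟩, ?_⟩, ?_⟩
        · rw [card_insert_of_notMem hnotmem, card_emb, hQ2]
        · push_neg
          exact ⟨r, mem_insert_self _ _⟩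
        · ext ⟨j, s⟩
          rw [mem_strip, mem_insert]
          constructor
          · rintro (heq | hm)
            · rw [Prod.mk.injEq] at heq
              exact absurd heq.1 (Fin.castSucc_lt_last j).ne
            · rw [mem_emb] at hm
              obtain ⟨c, hc, heq⟩ := hm
              rw [Prod.mk.injEq, Fin.castSucc_inj] at heq
              have hcp : c = (j, s) := Prod.ext_iff.mpr heq
              exact hcp ▸ hc
          · intro h
            exact Or.inr (mem_emb.mpr ⟨(j, s), h, rfl⟩)
      · intro r₁ h₁ r₂ h₂ heq
        have : (L, r₁) ∈ insert (L, r₂) (emb Q) := heq ▸ mem_insert_self _ _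
        rw [mem_insert] at this
        rcases this with heq' | hm
        · exact (Prod.mk.injEq .. ▸ heq').2
        · rw [mem_emb] at hm
          obtain ⟨c, _, heq'⟩ := hm
          rw [Prod.mk.injEq] at heq'
          exact absurd heq'.1 (Fin.castSucc_lt_last c.1).ne
      · intro P hP
        rw [mem_filter] at hP
        obtain ⟨hP', hPQ⟩ := hP
        rw [mem_filter] at hP'
        obtain ⟨hP1, hP2⟩ := hP'
        obtain ⟨hP3, hP4⟩ := mem_RPf.mp hP1
        push_neg at hP2
        obtain ⟨r, hr⟩ := hP2
        refine ⟨r, ?_, ?_⟩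
        · rw [mem_sdiff, mem_range]
          refine ⟨hP3.1 _ hr, ?_⟩
          intro hm
          rw [mem_image] at hm
          obtain ⟨⟨j, s⟩, hc, hs⟩ := hm
          rw [← hPQ, mem_strip] at hc
          have hne : ((Fin.castSucc j, s) : Fin (n + 1) × ℕ) ≠ (L, r) := by
            intro heq
            rw [Prod.mk.injEq] at heq
            exact (Fin.castSucc_lt_last j).ne heq.1
          exact (hP3.2 _ hc _ hr hne).2 hs
        · rw [← hPQ, strip_spec hP3 hr, insert_erase hr]
    rw [Finset.sum_congr rfl hfiber, sum_const, smul_eq_mul, mul_comm]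

lemma rookNum_succ {b : Fin (n + 1) → ℕ} (hb : Monotone b) (k : ℕ) :
    (rookNum b (k + 1) : ℤ) =
      rookNum (b ∘ Fin.castSucc) (k + 1) +
        ((b (Fin.last n) : ℤ) - k) * rookNum (b ∘ Fin.castSucc) k := by
  rw [rookNum_succ_nat hb k]
  rcases le_or_gt k (b (Fin.last n)) with h | h
  · push_cast [h]
    ring
  · have h0 : rookNum (b ∘ Fin.castSucc) k = 0 := by
      by_contra hc
      exact absurd (rookNum_nonzero_le hb hc) (not_le.mpr h)
    rw [h0]
    push_cast
    ring

lemma fallFact_succ (x : ℤ) (j : ℕ) : fallFact x (j + 1) = fallFact x j * (x - j) := by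
  rw [fallFact, fallFact, Finset.prod_range_succ]

end GJW

open GJW in
theorem stmt13' {n : ℕ} : ∀ (b : Fin n → ℕ), Monotone b →
    ∀ x : ℤ, ∑ k ∈ Finset.range (n + 1), (rookNum b k : ℤ) * fallFact x (n - k) =
      ∏ i : Fin n, (x + (b i : ℤ) - (i : ℤ)) := by
  induction n with
  | zero =>
    intro b hb x
    simp [GJW.rookNum_zero, fallFact]
  | succ n ih =>
    intro b hb x
    set b' := b ∘ Fin.castSucc with hb'
    have hb'mono : Monotone b' := hb.comp (Fin.strictMono_castSucc.monotone)
    have IH := ih b' hb'mono x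
    have hRHS : ∏ i : Fin (n + 1), (x + (b i : ℤ) - (i : ℤ)) =
        (∏ i : Fin n, (x + (b' i : ℤ) - (i : ℤ))) * (x + (b (Fin.last n) : ℤ) - n) := by
      rw [Fin.prod_univ_castSucc]
      simp [hb', Fin.val_last]
    rw [hRHS, ← IH]
    rw [Finset.sum_range_succ' (fun k => (rookNum b k : ℤ) * fallFact x (n + 1 - k)) (n + 1)]
    have hsum1 : ∀ k ∈ Finset.range (n + 1),
        (rookNum b (k + 1) : ℤ) * fallFact x (n + 1 - (k + 1)) =
          (rookNum b' (k + 1) : ℤ) * fallFact x (n - k) +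
            (rookNum b' k : ℤ) * (((x + (b (Fin.last n) : ℤ)) - n) * fallFact x (n - k)
              - fallFact x (n + 1 - k)) := by
      intro k hk
      rw [Finset.mem_range] at hk
      have hk' : k ≤ n := by omega
      have h1 : n + 1 - (k + 1) = n - k := by omega
      have h2 : n + 1 - k = (n - k) + 1 := by omega
      rw [h1, GJW.rookNum_succ hb k, h2, GJW.fallFact_succ]
      have hcast : ((n - k : ℕ) : ℤ) = (n : ℤ) - k := by omega
      rw [hcast]
      ring
    rw [Finset.sum_congr rfl hsum1, Finset.sum_add_distrib]
    have hsplit2 : ∑ k ∈ Finset.range (n + 1), (rookNum b' k : ℤ) *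
        (((x + (b (Fin.last n) : ℤ)) - n) * fallFact x (n - k) - fallFact x (n + 1 - k)) =
        ((x + (b (Fin.last n) : ℤ)) - n) * (∑ k ∈ Finset.range (n + 1),
          (rookNum b' k : ℤ) * fallFact x (n - k)) -
        ∑ k ∈ Finset.range (n + 1), (rookNum b' k : ℤ) * fallFact x (n + 1 - k) := by
      rw [Finset.mul_sum, ← Finset.sum_sub_distrib]
      apply Finset.sum_congr rfl
      intro k _
      ring
    rw [hsplit2]
    have hlast : ∑ k ∈ Finset.range (n + 1), (rookNum b' (k + 1) : ℤ) * fallFact x (n - k)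
        + (rookNum b 0 : ℤ) * fallFact x (n + 1 - 0) =
        ∑ k ∈ Finset.range (n + 1), (rookNum b' k : ℤ) * fallFact x (n + 1 - k) := by
      rw [rookNum_zero]
      rw [Finset.sum_range_succ' (fun k => (rookNum b' k : ℤ) * fallFact x (n + 1 - k)) n]
      rw [Finset.sum_range_succ (fun k => (rookNum b' (k + 1) : ℤ) * fallFact x (n - k)) n]
      rw [rookNum_of_lt b' (by omega : n < n + 1)]
      have : ∀ k ∈ Finset.range n, (rookNum b' (k + 1) : ℤ) * fallFact x (n - k) =
          (rookNum b' (k + 1) : ℤ) * fallFact x (n + 1 - (k + 1)) := by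
        intro k hk
        congr 2
        omega
      rw [Finset.sum_congr rfl this]
      rw [rookNum_zero]
      push_cast
      ring
    rw [← hlast]
    ring

/-- Goldman–Joichi–White factorization: for a Ferrers board
`b = (b_1,…,b_n)` and every integer `x`,
`∑_{k=0}^n r_k(B) x↓_{n-k} = ∏_{i=1}^n (x + b_i - (i-1))`. -/
theorem stmt13 {n : ℕ} (b : Fin n → ℕ) (hb : Monotone b) :
    ∀ x : ℤ, ∑ k ∈ Finset.range (n + 1), (rookNum b k : ℤ) * fallFact x (n - k) =
      ∏ i : Fin n, (x + (b i : ℤ) - (i : ℤ)) := stmt13' b hb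
end

section
/- (Foata–Schützenberger) Every Ferrers board is rook equivalent to a unique Ferrers board with strictly increasing column heights; that is, for every Ferrers board B there is exactly one sequence 0 < c_1 < c_2 < ⋯ < c_k of strictly increasing positive integers such that the Ferrers board with column heights (c_1,…,c_k) is rook equivalent to B. -/
namespace FS


open Finset


noncomputable def plc {n : ℕ} (b : Fin n → ℕ) (k : ℕ) : Finset (Finset (Fin n × ℕ)) :=
  @Finset.filter _ (fun P => IsRookPlacement b P ∧ P.card = k) (Classical.decPred _)
    ((Finset.univ ×ˢ Finset.range (Finset.univ.sup b)).powerset)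

lemma mem_plc {n : ℕ} {b : Fin n → ℕ} {k : ℕ} {P : Finset (Fin n × ℕ)} :
    P ∈ plc b k ↔ IsRookPlacement b P ∧ P.card = k := by
  simp only [plc, Finset.mem_filter, Finset.mem_powerset, and_iff_right_iff_imp]
  rintro ⟨h1, h2⟩ c hc
  exact Finset.mem_product.2 ⟨Finset.mem_univ _,
    Finset.mem_range.2 ((h1.1 c hc).trans_le (Finset.le_sup (Finset.mem_univ _)))⟩

lemma rookNum_eq {n : ℕ} (b : Fin n → ℕ) (k : ℕ) : rookNum b k = (plc b k).card := by
  rw [rookNum, ← Set.ncard_coe_finset]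
  congr 1
  ext P
  simp [mem_plc]

lemma rookNum_zero {n : ℕ} (b : Fin n → ℕ) : rookNum b 0 = 1 := by
  rw [rookNum_eq]
  have : plc b 0 = {∅} := by
    ext P
    simp only [mem_plc, Finset.mem_singleton, Finset.card_eq_zero]
    constructor
    · rintro ⟨-, h⟩; exact h
    · rintro rfl
      exact ⟨⟨by simp, by simp⟩, rfl⟩
  rw [this, Finset.card_singleton]

lemma fst_injOn {n : ℕ} {b : Fin n → ℕ} {P : Finset (Fin n × ℕ)} (h : IsRookPlacement b P) :
    Set.InjOn Prod.fst (↑P : Set (Fin n × ℕ)) := by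
  intro c hc d hd hcd
  by_contra hne
  exact (h.2 c hc d hd hne).1 hcd

lemma snd_injOn {n : ℕ} {b : Fin n → ℕ} {P : Finset (Fin n × ℕ)} (h : IsRookPlacement b P) :
    Set.InjOn Prod.snd (↑P : Set (Fin n × ℕ)) := by
  intro c hc d hd hcd
  by_contra hne
  exact (h.2 c hc d hd hne).2 hcd

lemma rookNum_zero_of_lt {n : ℕ} (b : Fin n → ℕ) {k : ℕ} (h : n < k) : rookNum b k = 0 := by
  rw [rookNum_eq, Finset.card_eq_zero]
  ext P
  simp only [mem_plc, Finset.notMem_empty, iff_false, not_and]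
  intro hP hcard
  have : P.card ≤ n := by
    classical
    calc P.card = (P.image Prod.fst).card := (Finset.card_image_of_injOn (fst_injOn hP)).symm
    _ ≤ Fintype.card (Fin n) := (Finset.card_le_univ _).trans_eq (by simp)
    _ = n := by simp
  omega



lemma rookNum_comp {m n : ℕ} (φ : Fin m → Fin n) (hφ : Function.Injective φ)
    (b : Fin n → ℕ) (hb : ∀ l, (∀ j, φ j ≠ l) → b l = 0) (k : ℕ) :
    rookNum (fun j => b (φ j)) k = rookNum b k := by
  classical
  rw [rookNum_eq, rookNum_eq]
  set e : Fin m × ℕ → Fin n × ℕ := fun c => (φ c.1, c.2) with he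
  have hei : Function.Injective e := by
    rintro ⟨a1, a2⟩ ⟨d1, d2⟩ h
    simp only [he, Prod.mk.injEq] at h
    exact Prod.ext (hφ h.1) h.2
  apply Finset.card_bij (fun P _ => P.image e)
  · intro P hP
    rw [mem_plc] at hP ⊢
    obtain ⟨⟨h1, h2⟩, h3⟩ := hP
    refine ⟨⟨?_, ?_⟩, ?_⟩
    · intro c hc
      obtain ⟨d, hd, rfl⟩ := Finset.mem_image.1 hc
      exact h1 d hd
    · intro c hc d hd hcd
      obtain ⟨c', hc', rfl⟩ := Finset.mem_image.1 hc
      obtain ⟨d', hd', rfl⟩ := Finset.mem_image.1 hd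
      have hne : c' ≠ d' := fun h => hcd (by rw [h])
      obtain ⟨u, v⟩ := h2 c' hc' d' hd' hne
      exact ⟨fun h => u (hφ h), v⟩
    · rw [Finset.card_image_of_injective _ hei, h3]
  · intro P hP Q hQ h
    exact Finset.image_injective hei h
  · intro Q hQ
    rw [mem_plc] at hQ
    obtain ⟨⟨h1, h2⟩, h3⟩ := hQ
    have hrange : ∀ c ∈ Q, c ∈ Set.range e := by
      intro c hc
      rcases em (∃ j, φ j = c.1) with ⟨j, hj⟩ | hno
      · exact ⟨(j, c.2), by simp [he, hj]⟩
      · exfalso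
        have h0 : b c.1 = 0 := hb c.1 (fun j h => hno ⟨j, h⟩)
        have := h1 c hc; omega
    set P₀ := Q.preimage e hei.injOn with hP₀
    have himg : P₀.image e = Q := by
      rw [hP₀, Finset.image_preimage]
      exact Finset.filter_true_of_mem hrange
    refine ⟨P₀, ?_, himg⟩
    rw [mem_plc]
    have hcard : P₀.card = Q.card := by
      rw [← himg, Finset.card_image_of_injective _ hei]
    refine ⟨⟨?_, ?_⟩, by rw [hcard, h3]⟩
    · intro c hc
      exact h1 (e c) (Finset.mem_preimage.1 hc)
    · intro c hc d hd hcd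
      have hce : e c ≠ e d := fun h => hcd (hei h)
      obtain ⟨u, v⟩ := h2 (e c) (Finset.mem_preimage.1 hc) (e d) (Finset.mem_preimage.1 hd) hce
      exact ⟨fun h => u (by simp [he, h]), v⟩



lemma plc_del_col {n : ℕ} {b : Fin (n+1) → ℕ} {j : ℕ} {P : Finset (Fin (n+1) × ℕ)}
    (hP : P ∈ plc (fun i : Fin (n+1) => if i = Fin.last n then 0 else b i) j) :
    ∀ c ∈ P, c.1 ≠ Fin.last n := by
  intro c hc h
  have := (mem_plc.1 hP).1.1 c hc
  simp only [h, if_pos] at this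
  omega

lemma card_rec {n : ℕ} (b : Fin (n+1) → ℕ) (hb : Monotone b) (k : ℕ) :
    (plc b (k+1)).card = (plc (fun i : Fin (n+1) => if i = Fin.last n then 0 else b i) (k+1)).card
      + (plc (fun i : Fin (n+1) => if i = Fin.last n then 0 else b i) k).card
        * (b (Fin.last n) - k) := by
  classical
  set β := b (Fin.last n) with hβ
  set bb : Fin (n+1) → ℕ := fun i => if i = Fin.last n then 0 else b i with hbb
  have hrows : ∀ j (P : Finset (Fin (n+1) × ℕ)), P ∈ plc bb j → ∀ c ∈ P, c.2 < b c.1 := by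
    intro j P hP c hc
    have h1 := (mem_plc.1 hP).1.1 c hc
    simpa [hbb, plc_del_col hP c hc] using h1
  have himgsub : ∀ j (P : Finset (Fin (n+1) × ℕ)), P ∈ plc bb j →
      P.image Prod.snd ⊆ Finset.range β := by
    intro j P hP x hx
    obtain ⟨c, hc, rfl⟩ := Finset.mem_image.1 hx
    exact Finset.mem_range.2 ((hrows j P hP c hc).trans_le (hb (Fin.le_last c.1)))
  have hcard_img : ∀ j (P : Finset (Fin (n+1) × ℕ)), P ∈ plc bb j →
      (P.image Prod.snd).card = j := by
    intro j P hP
    rw [Finset.card_image_of_injOn (snd_injOn (mem_plc.1 hP).1), (mem_plc.1 hP).2]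
  -- split
  have hsplit := Finset.card_filter_add_card_filter_not
    (s := plc b (k+1)) (p := fun P => ∀ c ∈ P, c.1 ≠ Fin.last n)
  -- part A: no rook in last column
  have hA : (plc b (k+1)).filter (fun P => ∀ c ∈ P, c.1 ≠ Fin.last n) = plc bb (k+1) := by
    ext P
    simp only [Finset.mem_filter, mem_plc]
    constructor
    · rintro ⟨⟨⟨h1, h2⟩, h3⟩, h4⟩
      refine ⟨⟨fun c hc => ?_, h2⟩, h3⟩
      simpa [hbb, h4 c hc] using h1 c hc
    · rintro ⟨⟨h1, h2⟩, h3⟩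
      have h4 : ∀ c ∈ P, c.1 ≠ Fin.last n := by
        intro c hc h
        have := h1 c hc
        simp only [hbb, h, if_pos] at this
        omega
      refine ⟨⟨⟨fun c hc => ?_, h2⟩, h3⟩, h4⟩
      have := h1 c hc
      simpa [hbb, h4 c hc] using this
  -- part B: a rook in the last column
  have hB : ((plc b (k+1)).filter (fun P => ¬ ∀ c ∈ P, c.1 ≠ Fin.last n)).card
      = ((plc bb k).sigma (fun P => Finset.range β \ P.image Prod.snd)).card := by
    symm
    apply Finset.card_bij (fun x _ => insert (Fin.last n, x.2) x.1)
    · rintro ⟨P, r⟩ hx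
      obtain ⟨hP, hr⟩ := Finset.mem_sigma.1 hx
      obtain ⟨hrβ, hrni⟩ := Finset.mem_sdiff.1 hr
      have hnm : (Fin.last n, r) ∉ P := fun h => plc_del_col hP _ h rfl
      obtain ⟨⟨h1, h2⟩, h3⟩ := mem_plc.1 hP
      rw [Finset.mem_filter, mem_plc]
      refine ⟨⟨⟨?_, ?_⟩, ?_⟩, ?_⟩
      · intro c hc
        rcases Finset.mem_insert.1 hc with rfl | hc'
        · simpa [hβ] using Finset.mem_range.1 hrβ
        · exact hrows k P hP c hc'
      · intro c hc d hd hcd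
        rcases Finset.mem_insert.1 hc with rfl | hc' <;>
          rcases Finset.mem_insert.1 hd with rfl | hd'
        · exact absurd rfl hcd
        · refine ⟨fun h => plc_del_col hP d hd' h.symm, fun h => hrni ?_⟩
          exact Finset.mem_image.2 ⟨d, hd', h.symm⟩
        · refine ⟨fun h => plc_del_col hP c hc' h, fun h => hrni ?_⟩
          exact Finset.mem_image.2 ⟨c, hc', h⟩
        · exact h2 c hc' d hd' hcd
      · rw [Finset.card_insert_of_notMem hnm, h3]
      · intro hall
        exact hall (Fin.last n, r) (Finset.mem_insert_self _ _) rfl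
    · rintro ⟨P₁, r₁⟩ h₁ ⟨P₂, r₂⟩ h₂ heq
      obtain ⟨hP₁, hr₁⟩ := Finset.mem_sigma.1 h₁
      obtain ⟨hP₂, hr₂⟩ := Finset.mem_sigma.1 h₂
      have hnm₁ : (Fin.last n, r₁) ∉ P₁ := fun h => plc_del_col hP₁ _ h rfl
      have hnm₂ : (Fin.last n, r₂) ∉ P₂ := fun h => plc_del_col hP₂ _ h rfl
      have hrr : r₁ = r₂ := by
        have : (Fin.last n, r₁) ∈ insert (Fin.last n, r₂) P₂ := by
          rw [← heq]; exact Finset.mem_insert_self _ _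
        rcases Finset.mem_insert.1 this with h | h
        · exact (Prod.ext_iff.1 h).2
        · exact absurd rfl (plc_del_col hP₂ _ h)
      subst hrr
      have hPP : P₁ = P₂ := by
        have := congrArg (fun s => Finset.erase s (Fin.last n, r₁)) heq
        simpa [Finset.erase_insert hnm₁, Finset.erase_insert hnm₂] using this
      rw [hPP]
    · intro Q hQ
      rw [Finset.mem_filter, mem_plc] at hQ
      obtain ⟨⟨⟨h1, h2⟩, h3⟩, h4⟩ := hQ
      push_neg at h4
      obtain ⟨c, hc, hcl⟩ := h4
      have hceq : c = (Fin.last n, c.2) := by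
        rw [← hcl]
      refine ⟨⟨Q.erase c, c.2⟩, ?_, ?_⟩
      · rw [Finset.mem_sigma]
        constructor
        · rw [mem_plc]
          refine ⟨⟨?_, ?_⟩, ?_⟩
          · intro d hd
            have hdQ := Finset.mem_of_mem_erase hd
            have hdc : d ≠ c := Finset.ne_of_mem_erase hd
            have hdl : d.1 ≠ Fin.last n := by
              intro h
              exact (h2 d hdQ c hc hdc).1 (by rw [h, hcl])
            simpa [hbb, hdl] using h1 d hdQ
          · intro x hx y hy hxy
            exact h2 x (Finset.mem_of_mem_erase hx) y (Finset.mem_of_mem_erase hy) hxy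
          · rw [Finset.card_erase_of_mem hc, h3]; omega
        · rw [Finset.mem_sdiff]
          constructor
          · exact Finset.mem_range.2 (by rw [hβ, ← hcl]; exact h1 c hc)
          · intro h
            obtain ⟨d, hd, hds⟩ := Finset.mem_image.1 h
            have hdc : d ≠ c := Finset.ne_of_mem_erase hd
            exact (h2 d (Finset.mem_of_mem_erase hd) c hc hdc).2 hds
      · rw [← hceq] at *
        exact Finset.insert_erase hc
  rw [← hsplit, hA, hB, Finset.card_sigma]
  congr 1
  rw [Finset.sum_congr rfl (fun P hP => ?_), Finset.sum_const, smul_eq_mul]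
  rw [Finset.card_sdiff_of_subset (himgsub k P hP), hcard_img k P hP, Finset.card_range]



def D (m : ℕ) (x : ℤ) : ℤ := ∏ j ∈ Finset.range m, (x - (j : ℤ))

def prodFun {n : ℕ} (b : Fin n → ℕ) (x : ℤ) : ℤ := ∏ i : Fin n, (x - rootVec b i)

lemma rookNum_del_eq {n : ℕ} (b : Fin (n+1) → ℕ) (j : ℕ) :
    rookNum (fun i : Fin n => b i.castSucc) j
      = rookNum (fun i : Fin (n+1) => if i = Fin.last n then 0 else b i) j := by
  have h := rookNum_comp (Fin.castSucc : Fin n → Fin (n+1)) (Fin.castSucc_injective n)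
    (fun i : Fin (n+1) => if i = Fin.last n then 0 else b i)
    (fun l hl => by
      rcases eq_or_ne l (Fin.last n) with rfl | hne
      · simp
      · obtain ⟨j', rfl⟩ := Fin.exists_castSucc_eq.2 hne
        exact absurd rfl (hl j')) j
  rw [← h]
  congr 1
  funext i
  simp [(Fin.castSucc_lt_last i).ne]

lemma rookNum_del_le {n : ℕ} {b : Fin (n+1) → ℕ} (hb : Monotone b) {j : ℕ}
    (h : rookNum (fun i : Fin (n+1) => if i = Fin.last n then 0 else b i) j ≠ 0) :
    j ≤ b (Fin.last n) := by
  classical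
  rw [rookNum_eq] at h
  obtain ⟨P, hP⟩ := Finset.card_ne_zero.1 h
  obtain ⟨⟨h1, h2⟩, h3⟩ := mem_plc.1 hP
  have hsub : P.image Prod.snd ⊆ Finset.range (b (Fin.last n)) := by
    intro x hx
    obtain ⟨c, hc, rfl⟩ := Finset.mem_image.1 hx
    have hcl : c.1 ≠ Fin.last n := plc_del_col hP c hc
    have hlt : c.2 < b c.1 := by simpa [hcl] using h1 c hc
    exact Finset.mem_range.2 (hlt.trans_le (hb (Fin.le_last c.1)))
  calc j = P.card := h3.symm
  _ = (P.image Prod.snd).card := (Finset.card_image_of_injOn (snd_injOn (mem_plc.1 hP).1)).symm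
  _ ≤ _ := (Finset.card_le_card hsub).trans_eq (Finset.card_range _)

lemma rook_rec {n : ℕ} (b : Fin (n+1) → ℕ) (hb : Monotone b) (k : ℕ) :
    (rookNum b (k+1) : ℤ) =
      (rookNum (fun i : Fin n => b i.castSucc) (k+1) : ℤ)
      + ((b (Fin.last n) : ℤ) - k) * (rookNum (fun i : Fin n => b i.castSucc) k : ℤ) := by
  classical
  rw [rookNum_del_eq b (k+1), rookNum_del_eq b k]
  have hcards := card_rec b hb k
  rw [rookNum_eq, rookNum_eq, rookNum_eq]
  by_cases hk : k ≤ b (Fin.last n)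
  · rw [hcards]
    push_cast [Nat.cast_sub hk]
    ring
  · have h0 : (plc (fun i : Fin (n+1) => if i = Fin.last n then 0 else b i) k).card = 0 := by
      by_contra h
      exact hk (rookNum_del_le hb (by rwa [rookNum_eq]))
    rw [hcards, h0]
    push_cast
    ring

lemma gjw : ∀ (n : ℕ) (b : Fin n → ℕ), Monotone b → ∀ x : ℤ,
    ∑ k ∈ Finset.range (n+1), (rookNum b k : ℤ) * D (n - k) x = prodFun b x := by
  intro n
  induction n with
  | zero =>
    intro b hb x
    simp [D, prodFun, rookNum_zero]
  | succ n ih =>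
    intro b hb x
    set b' : Fin n → ℕ := fun i => b i.castSucc with hb'def
    have hb' : Monotone b' := fun i j hij => hb (by simpa using hij)
    have IH := ih b' hb' x
    set β : ℤ := (b (Fin.last n) : ℤ) with hβ
    have hrec : ∀ k, (rookNum b (k+1) : ℤ)
        = (rookNum b' (k+1) : ℤ) + (β - k) * (rookNum b' k : ℤ) := rook_rec b hb
    have hDsucc : ∀ m : ℕ, D (m+1) x = D m x * (x - m) := fun m => Finset.prod_range_succ _ m
    -- Claim 1: expand
    have claim1 : ∑ k ∈ Finset.range (n+1+1), (rookNum b k : ℤ) * D (n+1-k) x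
        = (∑ k ∈ Finset.range (n+1), (rookNum b' (k+1) : ℤ) * D (n-k) x)
          + (∑ k ∈ Finset.range (n+1), (rookNum b' k : ℤ) * ((β - k) * D (n-k) x))
          + D (n+1) x := by
      rw [Finset.sum_range_succ' (fun k => (rookNum b k : ℤ) * D (n+1-k) x) (n+1)]
      rw [rookNum_zero]
      have e1 : ∀ k ∈ Finset.range (n+1),
          (rookNum b (k+1) : ℤ) * D (n+1-(k+1)) x
          = (rookNum b' (k+1) : ℤ) * D (n-k) x
            + (rookNum b' k : ℤ) * ((β - k) * D (n-k) x) := by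
        intro k hk
        have hnk : n+1-(k+1) = n-k := by omega
        rw [hnk, hrec k]
        ring
      rw [Finset.sum_congr rfl e1, Finset.sum_add_distrib]
      push_cast
      ring
    have claim2 : (∑ k ∈ Finset.range (n+1), (rookNum b' (k+1) : ℤ) * D (n-k) x) + D (n+1) x
        = ∑ k ∈ Finset.range (n+1), (rookNum b' k : ℤ) * D (n-k+1) x := by
      rw [Finset.sum_range_succ' (fun k => (rookNum b' k : ℤ) * D (n-k+1) x) n]
      rw [Finset.sum_range_succ (fun k => (rookNum b' (k+1) : ℤ) * D (n-k) x) n]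
      rw [rookNum_zero_of_lt b' (Nat.lt_succ_self n), rookNum_zero b']
      have e : ∀ k ∈ Finset.range n, (rookNum b' (k+1) : ℤ) * D (n-(k+1)+1) x
          = (rookNum b' (k+1) : ℤ) * D (n-k) x := by
        intro k hk
        rw [Finset.mem_range] at hk
        congr 2
        omega
      rw [Finset.sum_congr rfl e]
      simp
    have claim3 : (∑ k ∈ Finset.range (n+1), (rookNum b' k : ℤ) * D (n-k+1) x)
          + ∑ k ∈ Finset.range (n+1), (rookNum b' k : ℤ) * ((β - k) * D (n-k) x)
        = (∑ k ∈ Finset.range (n+1), (rookNum b' k : ℤ) * D (n-k) x) * (x - (n:ℤ) + β) := by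
      rw [Finset.sum_mul, ← Finset.sum_add_distrib]
      apply Finset.sum_congr rfl
      intro k hk
      rw [Finset.mem_range] at hk
      have hcast : ((n - k : ℕ) : ℤ) = (n : ℤ) - k := by
        rw [Nat.cast_sub (by omega)]
      rw [hDsucc (n-k), hcast]
      ring
    have hprod : prodFun b x = prodFun b' x * (x - (n:ℤ) + β) := by
      rw [prodFun, Fin.prod_univ_castSucc, prodFun]
      have h1 : ∀ i : Fin n, x - rootVec b i.castSucc = x - rootVec b' i := by
        intro i
        simp [rootVec, hb'def]
      have h2 : x - rootVec b (Fin.last n) = x - (n:ℤ) + β := by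
        rw [hβ]
        simp [rootVec]
        ring
      rw [Finset.prod_congr rfl (fun i _ => h1 i), h2]
    calc ∑ k ∈ Finset.range (n+1+1), (rookNum b k : ℤ) * D (n+1-k) x
        = _ := claim1
      _ = (∑ k ∈ Finset.range (n+1), (rookNum b' k : ℤ) * D (n-k+1) x)
          + ∑ k ∈ Finset.range (n+1), (rookNum b' k : ℤ) * ((β - k) * D (n-k) x) := by
          rw [← claim2]; ring
      _ = (∑ k ∈ Finset.range (n+1), (rookNum b' k : ℤ) * D (n-k) x) * (x - (n:ℤ) + β) := claim3
      _ = prodFun b' x * (x - (n:ℤ) + β) := by rw [IH]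
      _ = prodFun b x := hprod.symm


lemma D_pos_self (m : ℕ) : 0 < D m (m : ℤ) := by
  apply Finset.prod_pos
  intro j hj
  rw [Finset.mem_range] at hj
  omega

lemma D_eq_zero {m t : ℕ} (h : t < m) : D m (t : ℤ) = 0 :=
  Finset.prod_eq_zero (Finset.mem_range.2 h) (by simp)

lemma sum_D_inj {n : ℕ} (f g : ℕ → ℤ)
    (h : ∀ x : ℤ, ∑ k ∈ Finset.range (n+1), f k * D (n-k) x
       = ∑ k ∈ Finset.range (n+1), g k * D (n-k) x) :
    ∀ k, k ≤ n → f k = g k := by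
  have hdiff : ∀ x : ℤ, ∑ k ∈ Finset.range (n+1), (f k - g k) * D (n-k) x = 0 := by
    intro x
    rw [Finset.sum_congr rfl (fun k _ => sub_mul (f k) (g k) (D (n-k) x)),
      Finset.sum_sub_distrib, h x, sub_self]
  have main : ∀ m, m ≤ n → f (n-m) = g (n-m) := by
    intro m
    induction m using Nat.strong_induction_on with
    | _ m IH =>
      intro hm
      have hz := hdiff (m : ℤ)
      rw [Finset.sum_eq_single_of_mem (n-m) (Finset.mem_range.2 (by omega))] at hz
      · rw [show n - (n - m) = m by omega] at hz
        have hD := D_pos_self m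
        rcases mul_eq_zero.1 hz with h0 | h0
        · linarith [h0]
        · omega
      · intro k hk hkne
        rw [Finset.mem_range] at hk
        rcases lt_or_gt_of_ne hkne with hlt | hgt
        · rw [D_eq_zero (by omega : m < n - k), mul_zero]
        · have h0 : f k = g k := by
            have := IH (n - k) (by omega) (by omega)
            rwa [show n - (n - k) = k by omega] at this
          rw [h0, sub_self, zero_mul]
  intro k hk
  have := main (n - k) (by omega)
  rwa [show n - (n - k) = k by omega] at this

lemma rookEquiv_of_prodFun_eq {N : ℕ} {b₁ b₂ : Fin N → ℕ} (h₁ : Monotone b₁) (h₂ : Monotone b₂)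
    (h : ∀ x : ℤ, prodFun b₁ x = prodFun b₂ x) : RookEquiv b₁ b₂ := by
  have hk : ∀ k, k ≤ N → (rookNum b₁ k : ℤ) = (rookNum b₂ k : ℤ) :=
    sum_D_inj _ _ (fun x => by rw [gjw N b₁ h₁ x, gjw N b₂ h₂ x, h x])
  intro k
  rcases le_or_gt k N with hle | hlt
  · exact_mod_cast hk k hle
  · rw [rookNum_zero_of_lt b₁ hlt, rookNum_zero_of_lt b₂ hlt]

lemma prodFun_eq_of_rookEquiv {N : ℕ} {b₁ b₂ : Fin N → ℕ} (h₁ : Monotone b₁) (h₂ : Monotone b₂)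
    (h : RookEquiv b₁ b₂) (x : ℤ) : prodFun b₁ x = prodFun b₂ x := by
  rw [← gjw N b₁ h₁ x, ← gjw N b₂ h₂ x]
  exact Finset.sum_congr rfl fun k _ => by rw [h k]

def rootM {n : ℕ} (b : Fin n → ℕ) : Multiset ℤ := Finset.univ.val.map (rootVec b)

lemma prodFun_eq_M {n : ℕ} (b : Fin n → ℕ) (x : ℤ) :
    prodFun b x = ((rootM b).map (fun a => x - a)).prod := by
  rw [prodFun, rootM, Multiset.map_map, Finset.prod_eq_multiset_prod]
  rfl

lemma rootM_eq_of_prodFun {n₁ n₂ : ℕ} (b₁ : Fin n₁ → ℕ) (b₂ : Fin n₂ → ℕ)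
    (h : ∀ x : ℤ, prodFun b₁ x = prodFun b₂ x) : rootM b₁ = rootM b₂ := by
  have e : ∀ {n : ℕ} (b : Fin n → ℕ) (r : ℤ),
      Polynomial.eval r ((rootM b).map (fun a => Polynomial.X - Polynomial.C a)).prod
        = prodFun b r := by
    intro n b r
    rw [Polynomial.eval_multiset_prod, Multiset.map_map, prodFun_eq_M]
    apply congrArg
    apply Multiset.map_congr rfl
    intro a _
    simp
  have hpoly : ((rootM b₁).map (fun a => Polynomial.X - Polynomial.C a)).prod
      = ((rootM b₂).map (fun a => Polynomial.X - Polynomial.C a)).prod := by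
    apply Polynomial.funext
    intro r
    rw [e b₁ r, e b₂ r, h r]
  calc rootM b₁ = ((rootM b₁).map (fun a => Polynomial.X - Polynomial.C a)).prod.roots :=
        (Polynomial.roots_multiset_prod_X_sub_C _).symm
    _ = ((rootM b₂).map (fun a => Polynomial.X - Polynomial.C a)).prod.roots := by rw [hpoly]
    _ = rootM b₂ := Polynomial.roots_multiset_prod_X_sub_C _

lemma prodFun_eq_of_rootM {n₁ n₂ : ℕ} (b₁ : Fin n₁ → ℕ) (b₂ : Fin n₂ → ℕ)
    (h : rootM b₁ = rootM b₂) (x : ℤ) : prodFun b₁ x = prodFun b₂ x := by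
  rw [prodFun_eq_M, prodFun_eq_M, h]



def Rm (m : ℕ) : Multiset ℤ := (Multiset.range m).map (Nat.cast : ℕ → ℤ)

def Pad (m : ℕ) {k : ℕ} (c : Fin k → ℕ) : Fin (m + k) → ℕ :=
  fun i => if h : (i : ℕ) < m then 0 else c ⟨(i : ℕ) - m, by omega⟩

lemma Pad_monotone {m k : ℕ} {c : Fin k → ℕ} (hc : Monotone c) : Monotone (Pad m c) := by
  intro i j hij
  have hij' : (i : ℕ) ≤ (j : ℕ) := hij
  unfold Pad
  by_cases hi : (i : ℕ) < m <;> by_cases hj : (j : ℕ) < m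
  · simp [hi, hj]
  · simp [hi, hj]
  · omega
  · simp only [dif_neg hi, dif_neg hj]
    exact hc (by simp [Fin.mk_le_mk]; omega)

lemma rookNum_Pad (m : ℕ) {k : ℕ} (c : Fin k → ℕ) (k' : ℕ) :
    rookNum (Pad m c) k' = rookNum c k' := by
  have h := rookNum_comp (fun j : Fin k => (⟨m + (j : ℕ), by omega⟩ : Fin (m + k)))
    (fun a b hab => by
      have : m + (a : ℕ) = m + (b : ℕ) := congrArg Fin.val hab
      exact Fin.ext (by omega))
    (Pad m c)
    (fun l hl => by
      by_cases hlm : (l : ℕ) < m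
      · simp [Pad, hlm]
      · exact absurd (Fin.ext (by simp only []; omega : (m + ((⟨(l:ℕ) - m, by omega⟩ : Fin k) : ℕ) = (l : ℕ)))) (hl ⟨(l:ℕ) - m, by omega⟩)) k'
  rw [← h]
  congr 1
  funext j
  simp only [Pad, dif_neg (by omega : ¬ m + (j : ℕ) < m)]
  congr 1
  exact Fin.ext (by simp)

lemma rookNum_cast {n n' : ℕ} (h : n' = n) (b : Fin n → ℕ) (k : ℕ) :
    rookNum (fun i : Fin n' => b (Fin.cast h i)) k = rookNum b k := by
  apply rookNum_comp (Fin.cast h) (fun a b hab => by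
    exact Fin.ext (by simpa using congrArg Fin.val hab))
  intro l hl
  exact absurd (Fin.ext rfl : Fin.cast h (Fin.cast h.symm l) = l) (hl _)

lemma univ_val_map {α : Type*} {k : ℕ} (f : Fin k → α) :
    (Finset.univ.val.map f : Multiset α) = ((List.ofFn f : List α) : Multiset α) := by
  rw [Fin.univ_def]
  change ((List.finRange k : Multiset (Fin k)).map f) = _
  rw [Multiset.map_coe, Multiset.coe_eq_coe, ← List.ofFn_eq_map]

lemma rootM_Pad (m : ℕ) {k : ℕ} (c : Fin k → ℕ) :
    rootM (Pad m c)
      = Rm m + Finset.univ.val.map (fun j : Fin k => ((m : ℤ) + (j : ℕ) - (c j : ℤ))) := by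
  rw [rootM, univ_val_map, List.ofFn_add, ← Multiset.coe_add]
  congr 1
  · -- first part
    have : (fun i : Fin m => rootVec (Pad m c) (Fin.castLE (Nat.le_add_right m k) i)) = fun i : Fin m => (i : ℤ) := by
      funext i
      simp [rootVec, Pad, i.isLt]
    rw [this]
    rw [← univ_val_map (fun i : Fin m => (i : ℤ))]
    have hval : (Finset.univ.val.map (Fin.val : Fin m → ℕ)) = Multiset.range m := by
      have h := Fin.map_valEmbedding_univ (n := m)
      calc Finset.univ.val.map (Fin.val : Fin m → ℕ)
          = ((Finset.univ : Finset (Fin m)).map Fin.valEmbedding).val := (Finset.map_val Fin.valEmbedding Finset.univ).symm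
        _ = (Finset.Iio m).val := by rw [h]
        _ = (Finset.range m).val := by rw [Nat.Iio_eq_range]
        _ = Multiset.range m := rfl
    rw [Rm, ← hval, Multiset.map_map]
    rfl
  · rw [← univ_val_map]
    apply Multiset.map_congr rfl
    intro j _
    show ((Fin.natAdd m j : Fin (m+k)) : ℤ) - (Pad m c (Fin.natAdd m j) : ℤ) = _
    have hv : Pad m c (Fin.natAdd m j) = c j := by
      unfold Pad
      rw [dif_neg (by simp only [Fin.coe_natAdd]; omega)]
      congr 1
      exact Fin.ext (by simp only [Fin.coe_natAdd]; omega)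
    rw [hv]
    simp



variable {n : ℕ}

noncomputable def mval (b : Fin n → ℕ) : ℕ :=
  Finset.univ.sup (fun i : Fin n => (rootVec b i + 1).toNat)

lemma rootVec_lt_mval (b : Fin n → ℕ) (i : Fin n) : rootVec b i < (mval b : ℤ) := by
  have h1 : rootVec b i + 1 ≤ ((rootVec b i + 1).toNat : ℤ) := Int.self_le_toNat _
  have h2 : ((rootVec b i + 1).toNat : ℕ) ≤ mval b :=
    Finset.le_sup (f := fun i : Fin n => (rootVec b i + 1).toNat) (Finset.mem_univ i)
  omega

lemma rootVec_step (b : Fin n → ℕ) (hb : Monotone b) (j : ℕ) (h : j + 1 < n) :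
    rootVec b ⟨j + 1, h⟩ ≤ rootVec b ⟨j, by omega⟩ + 1 := by
  have hle : b ⟨j, by omega⟩ ≤ b ⟨j + 1, h⟩ := hb (by simp [Fin.mk_le_mk])
  simp only [rootVec]
  push_cast
  omega

lemma exists_rootVec_eq (b : Fin n → ℕ) (hb : Monotone b) {t : ℕ} (ht : t < mval b) :
    ∃ i, rootVec b i = (t : ℤ) := by
  have hn : 0 < n := by
    by_contra h
    have : n = 0 := by omega
    subst this
    have : mval b = 0 := rfl
    omega
  haveI : NeZero n := ⟨by omega⟩
  obtain ⟨i₀, -, hi₀⟩ := Finset.exists_mem_eq_sup Finset.univ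
    (Finset.univ_nonempty (α := Fin n)) (fun i : Fin n => (rootVec b i + 1).toNat)
  have hmax : rootVec b i₀ = (mval b : ℤ) - 1 := by
    have : mval b = (rootVec b i₀ + 1).toNat := hi₀
    omega
  have main : ∀ j : ℕ, ∀ h : j < n, (t : ℤ) ≤ rootVec b ⟨j, h⟩ → ∃ i, rootVec b i = (t : ℤ) := by
    intro j
    induction j with
    | zero =>
      intro h hle
      refine ⟨⟨0, h⟩, le_antisymm ?_ hle⟩
      simp only [rootVec]
      push_cast
      omega
    | succ j ihj =>
      intro h hle
      by_cases hc : (t : ℤ) ≤ rootVec b ⟨j, by omega⟩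
      · exact ihj (by omega) hc
      · refine ⟨⟨j + 1, h⟩, ?_⟩
        have := rootVec_step b hb j h
        omega
  apply main i₀.1 i₀.2
  rw [Fin.eta]
  omega

lemma mem_rootM_of_lt (b : Fin n → ℕ) (hb : Monotone b) {t : ℕ} (ht : t < mval b) :
    (t : ℤ) ∈ rootM b := by
  obtain ⟨i, hi⟩ := exists_rootVec_eq b hb ht
  exact Multiset.mem_map.2 ⟨i, Finset.mem_val.mpr (Finset.mem_univ i), hi⟩

lemma Rm_nodup (m : ℕ) : (Rm m).Nodup :=
  (Multiset.nodup_range m).map (fun a b hab => by exact_mod_cast hab)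

lemma Rm_le_rootM (b : Fin n → ℕ) (hb : Monotone b) : Rm (mval b) ≤ rootM b := by
  rw [Multiset.le_iff_count]
  intro a
  by_cases hmem : a ∈ Rm (mval b)
  · have h1 : (Rm (mval b)).count a ≤ 1 :=
      Multiset.nodup_iff_count_le_one.1 (Rm_nodup _) a
    obtain ⟨t, htr, rfl⟩ := Multiset.mem_map.1 hmem
    have h2 : (t : ℤ) ∈ rootM b := mem_rootM_of_lt b hb (Multiset.mem_range.1 htr)
    have h3 : 1 ≤ (rootM b).count (t : ℤ) := Multiset.one_le_count_iff_mem.2 h2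
    omega
  · rw [Multiset.count_eq_zero_of_notMem hmem]
    omega

lemma card_rootM (b : Fin n → ℕ) : Multiset.card (rootM b) = n := by
  rw [rootM, Multiset.card_map]
  simpa using (Finset.card_univ (α := Fin n))

lemma card_Rm (m : ℕ) : Multiset.card (Rm m) = m := by
  rw [Rm, Multiset.card_map, Multiset.card_range]

lemma mval_le (b : Fin n → ℕ) (hb : Monotone b) : mval b ≤ n := by
  have := Multiset.card_le_card (Rm_le_rootM b hb)
  rwa [card_rootM, card_Rm] at this



lemma ofFn_get_cast {α : Type*} (l : List α) {k : ℕ} (h : k = l.length) :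
    List.ofFn (fun j : Fin k => l.get (Fin.cast h j)) = l := by
  subst h
  exact List.ofFn_get l

lemma rootM_cast {n n' : ℕ} (h : n' = n) (bB : Fin n → ℕ) :
    rootM (fun i : Fin n' => bB (Fin.cast h i)) = rootM bB := by
  rw [rootM, rootM]
  set emb : Fin n' ↪ Fin n := ⟨Fin.cast h, fun a b hab =>
    Fin.ext (by simpa using congrArg Fin.val hab)⟩ with hemb
  have hcast : Multiset.map (Fin.cast h) (Finset.univ.val : Multiset (Fin n'))
      = (Finset.univ.val : Multiset (Fin n)) := by
    calc Multiset.map (Fin.cast h) Finset.univ.val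
        = ((Finset.univ.map emb : Finset (Fin n))).val := (Finset.map_val emb Finset.univ).symm
      _ = (Finset.univ : Finset (Fin n)).val := by
          congr 1
          apply Finset.eq_univ_of_card
          rw [Finset.card_map]
          simp [h]
  rw [← hcast, Multiset.map_map]
  rfl

lemma exists_strict {n : ℕ} (b : Fin n → ℕ) (hb : Monotone b) :
    ∃ p : (k : ℕ) × (Fin k → ℕ), StrictMono p.2 ∧ (∀ i, 0 < p.2 i) ∧ RookEquiv p.2 b := by
  classical
  set m := mval b with hm
  set W : Multiset ℤ := rootM b - Rm m with hWdef
  have hle : Rm m ≤ rootM b := Rm_le_rootM b hb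
  have hWadd : Rm m + W = rootM b := by
    rw [hWdef, add_comm]
    exact tsub_add_cancel_of_le hle
  set l : List ℤ := Multiset.sort W (· ≥ ·) with hldef
  have hlW : (l : Multiset ℤ) = W := Multiset.sort_eq _ _
  have hlsort : l.Pairwise (· ≥ ·) := Multiset.pairwise_sort _ _
  have hmn : m ≤ n := mval_le b hb
  have hlen : n - m = l.length := by
    rw [hldef, Multiset.length_sort, hWdef, Multiset.card_sub hle, card_rootM, card_Rm]
  have hWmem : ∀ a ∈ W, a < (m : ℤ) := by
    intro a ha
    have h1 : a ∈ rootM b := Multiset.mem_of_le (tsub_le_self (a := rootM b) (b := Rm m))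
      (by rwa [← hWdef])
    obtain ⟨i, -, rfl⟩ := Multiset.mem_map.1 h1
    exact rootVec_lt_mval b i
  set k := n - m with hkdef
  set c : Fin k → ℕ := fun j => ((m : ℤ) + (j : ℕ) - l.get (Fin.cast hlen j)).toNat with hcdef
  have hget_mem : ∀ j : Fin k, l.get (Fin.cast hlen j) ∈ W := by
    intro j
    rw [← hlW]
    exact Multiset.mem_coe.2 (List.get_mem l (Fin.cast hlen j))
  have hcval : ∀ j : Fin k, (c j : ℤ) = (m : ℤ) + (j : ℕ) - l.get (Fin.cast hlen j) := by
    intro j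
    have h1 := hWmem _ (hget_mem j)
    rw [hcdef]
    rw [Int.toNat_of_nonneg (by omega)]
  have hpos : ∀ j, 0 < c j := by
    intro j
    have h1 := hWmem _ (hget_mem j)
    have h2 := hcval j
    omega
  have hsm : StrictMono c := by
    intro a b hab
    have hab' : (a : ℕ) < (b : ℕ) := hab
    have hlt : l.get (Fin.cast hlen b) ≤ l.get (Fin.cast hlen a) := by
      exact List.Pairwise.rel_get_of_lt hlsort hab'
    have h1 := hcval a
    have h2 := hcval b
    have h4 : (c a : ℤ) < c b := by omega
    exact_mod_cast h4
  have hWc : Finset.univ.val.map (fun j : Fin k => ((m : ℤ) + (j : ℕ) - (c j : ℤ))) = W := by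
    have e : (fun j : Fin k => ((m : ℤ) + (j : ℕ) - (c j : ℤ)))
        = fun j : Fin k => l.get (Fin.cast hlen j) := by
      funext j
      rw [hcval j]
      ring
    rw [e, univ_val_map, ofFn_get_cast l hlen, hlW]
  have heq : m + k = n := by omega
  have hrootPad : rootM (Pad m c) = rootM (fun i : Fin (m+k) => b (Fin.cast heq i)) := by
    rw [rootM_Pad, hWc, hWadd, rootM_cast heq b]
  have hmono2 : Monotone (fun i : Fin (m+k) => b (Fin.cast heq i)) := by
    intro i j hij
    exact hb hij
  have hre : RookEquiv c b := by
    intro k'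
    calc rookNum c k' = rookNum (Pad m c) k' := (rookNum_Pad m c k').symm
      _ = rookNum (fun i : Fin (m+k) => b (Fin.cast heq i)) k' :=
          rookEquiv_of_prodFun_eq (Pad_monotone hsm.monotone) hmono2
            (prodFun_eq_of_rootM _ _ hrootPad) k'
      _ = rookNum b k' := rookNum_cast heq b k'
  exact ⟨⟨k, c⟩, hsm, hpos, hre⟩



lemma gap {k : ℕ} {c : Fin k → ℕ} (hc : StrictMono c) :
    ∀ (d : ℕ) (i j : Fin k), (j : ℕ) = (i : ℕ) + d → c i + d ≤ c j := by
  intro d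
  induction d with
  | zero =>
    intro i j hij
    have : i = j := Fin.ext (by omega)
    subst this
    omega
  | succ d ih =>
    intro i j hij
    have hjk : (i : ℕ) + d < k := by have := j.isLt; omega
    have h1 := ih i ⟨(i : ℕ) + d, hjk⟩ rfl
    have h2 : c ⟨(i : ℕ) + d, hjk⟩ < c j := hc (by simp only [Fin.lt_def]; omega)
    omega

lemma lt_of_strict_pos {k : ℕ} {c : Fin k → ℕ} (hc : StrictMono c) (hp : ∀ i, 0 < c i)
    (j : Fin k) : (j : ℕ) < c j := by
  have h0 : 0 < k := j.pos
  have h1 := gap hc (j : ℕ) ⟨0, h0⟩ j (by simp)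
  have h2 := hp ⟨0, h0⟩
  omega

lemma mem_Rm_lt {M : ℕ} {a : ℤ} (h : a ∈ Rm M) : 0 ≤ a ∧ a < (M : ℤ) := by
  obtain ⟨t, ht, rfl⟩ := Multiset.mem_map.1 h
  have := Multiset.mem_range.1 ht
  omega

lemma unique_strict {k₁ k₂ : ℕ} (c₁ : Fin k₁ → ℕ) (c₂ : Fin k₂ → ℕ)
    (hs₁ : StrictMono c₁) (hp₁ : ∀ i, 0 < c₁ i) (hs₂ : StrictMono c₂) (hp₂ : ∀ i, 0 < c₂ i)
    (h : RookEquiv c₁ c₂) : (⟨k₁, c₁⟩ : (k : ℕ) × (Fin k → ℕ)) = ⟨k₂, c₂⟩ := by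
  have h21 : k₂ + k₁ = k₁ + k₂ := Nat.add_comm _ _
  have hre : RookEquiv (Pad k₂ c₁) (fun i : Fin (k₂ + k₁) => Pad k₁ c₂ (Fin.cast h21 i)) := by
    intro k
    calc rookNum (Pad k₂ c₁) k = rookNum c₁ k := rookNum_Pad _ _ _
      _ = rookNum c₂ k := h k
      _ = rookNum (Pad k₁ c₂) k := (rookNum_Pad _ _ _).symm
      _ = rookNum (fun i : Fin (k₂ + k₁) => Pad k₁ c₂ (Fin.cast h21 i)) k :=
          (rookNum_cast h21 (Pad k₁ c₂) k).symm
  have hm₁ : Monotone (Pad k₂ c₁) := Pad_monotone hs₁.monotone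
  have hm₂ : Monotone (fun i : Fin (k₂ + k₁) => Pad k₁ c₂ (Fin.cast h21 i)) := by
    intro i j hij
    exact Pad_monotone hs₂.monotone (show Fin.cast h21 i ≤ Fin.cast h21 j from hij)
  have hMeq : rootM (Pad k₂ c₁) = rootM (fun i : Fin (k₂ + k₁) => Pad k₁ c₂ (Fin.cast h21 i)) :=
    rootM_eq_of_prodFun _ _ (prodFun_eq_of_rookEquiv hm₁ hm₂ hre)
  rw [rootM_cast h21 (Pad k₁ c₂), rootM_Pad, rootM_Pad] at hMeq
  -- hMeq : Rm k₂ + W₁ = Rm k₁ + W₂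
  have hb₁ : ∀ a ∈ Finset.univ.val.map (fun j : Fin k₁ => ((k₂ : ℤ) + (j : ℕ) - (c₁ j : ℤ))),
      a < (k₂ : ℤ) := by
    intro a ha
    obtain ⟨j, -, rfl⟩ := Multiset.mem_map.1 ha
    have := lt_of_strict_pos hs₁ hp₁ j
    omega
  have hb₂ : ∀ a ∈ Finset.univ.val.map (fun j : Fin k₂ => ((k₁ : ℤ) + (j : ℕ) - (c₂ j : ℤ))),
      a < (k₁ : ℤ) := by
    intro a ha
    obtain ⟨j, -, rfl⟩ := Multiset.mem_map.1 ha
    have := lt_of_strict_pos hs₂ hp₂ j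
    omega
  have hkk : k₁ = k₂ := by
    have le1 : k₁ ≤ k₂ := by
      rcases Nat.eq_zero_or_pos k₁ with h0 | h0
      · omega
      · have hmem : ((k₁ - 1 : ℕ) : ℤ) ∈ Rm k₁ :=
          Multiset.mem_map.2 ⟨k₁ - 1, Multiset.mem_range.2 (by omega), rfl⟩
        have hmem2 : ((k₁ - 1 : ℕ) : ℤ) ∈ Rm k₂
            + Finset.univ.val.map (fun j : Fin k₁ => ((k₂ : ℤ) + (j : ℕ) - (c₁ j : ℤ))) := by
          rw [hMeq]
          exact Multiset.mem_add.2 (Or.inl hmem)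
        rcases Multiset.mem_add.1 hmem2 with hm | hm
        · have := (mem_Rm_lt hm).2
          omega
        · have := hb₁ _ hm
          omega
    have le2 : k₂ ≤ k₁ := by
      rcases Nat.eq_zero_or_pos k₂ with h0 | h0
      · omega
      · have hmem : ((k₂ - 1 : ℕ) : ℤ) ∈ Rm k₂ :=
          Multiset.mem_map.2 ⟨k₂ - 1, Multiset.mem_range.2 (by omega), rfl⟩
        have hmem2 : ((k₂ - 1 : ℕ) : ℤ) ∈ Rm k₁
            + Finset.univ.val.map (fun j : Fin k₂ => ((k₁ : ℤ) + (j : ℕ) - (c₂ j : ℤ))) := by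
          rw [← hMeq]
          exact Multiset.mem_add.2 (Or.inl hmem)
        rcases Multiset.mem_add.1 hmem2 with hm | hm
        · have := (mem_Rm_lt hm).2
          omega
        · have := hb₂ _ hm
          omega
    omega
  subst hkk
  have hW : Finset.univ.val.map (fun j : Fin k₁ => ((k₁ : ℤ) + (j : ℕ) - (c₁ j : ℤ)))
      = Finset.univ.val.map (fun j : Fin k₁ => ((k₁ : ℤ) + (j : ℕ) - (c₂ j : ℤ))) :=
    (add_right_inj _).1 hMeq
  have hsorted : ∀ (c : Fin k₁ → ℕ), StrictMono c →
      (List.ofFn (fun j : Fin k₁ => ((k₁ : ℤ) + (j : ℕ) - (c j : ℤ)))).Pairwise (· ≥ ·) := by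
    intro c hc
    apply List.pairwise_ofFn.2
    intro i j hij
    have hij' : (i : ℕ) < (j : ℕ) := hij
    have := gap hc ((j : ℕ) - (i : ℕ)) i j (by omega)
    simp only [ge_iff_le]
    push_cast
    omega
  have hl : List.ofFn (fun j : Fin k₁ => ((k₁ : ℤ) + (j : ℕ) - (c₁ j : ℤ)))
      = List.ofFn (fun j : Fin k₁ => ((k₁ : ℤ) + (j : ℕ) - (c₂ j : ℤ))) := by
    apply List.Perm.eq_of_pairwise' (hsorted c₁ hs₁) (hsorted c₂ hs₂)
    rw [← Multiset.coe_eq_coe, ← univ_val_map, ← univ_val_map]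
    exact hW
  have hfun := List.ofFn_injective hl
  have hc : c₁ = c₂ := by
    funext j
    have h1 := congrFun hfun j
    beta_reduce at h1
    omega
  rw [hc]


end FS

/-- Foata–Schützenberger: every Ferrers board is rook equivalent to
a unique Ferrers board with strictly increasing positive column heights. -/
theorem stmt15 {n : ℕ} (b : Fin n → ℕ) (hb : Monotone b) :
    ∃! p : (k : ℕ) × (Fin k → ℕ),
      StrictMono p.2 ∧ (∀ i, 0 < p.2 i) ∧ RookEquiv p.2 b := by
  obtain ⟨p, hp1, hp2, hp3⟩ := FS.exists_strict b hb
  refine ⟨p, ⟨hp1, hp2, hp3⟩, ?_⟩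
  rintro ⟨k', c'⟩ ⟨h1, h2, h3⟩
  obtain ⟨k, c⟩ := p
  exact FS.unique_strict c' c h1 h2 hp1 hp2 (fun j => (h3 j).trans (hp3 j).symm)
end

section
/- (Briggs–Remmel factorization) Fix a positive integer m. If B = (b_1,…,b_n) is a singleton board with n columns, then, as polynomials in x (equivalently, for every integer x), ∑_{k=0}^{n} r_{k,m}(B) · x↓_{n−k,m} = ∏_{i=1}^{n} (x + b_i − m(i−1)), where x↓_{j,m} = ∏_{i=0}^{j−1}(x − im) is the j-th m-falling factorial (with x↓_{0,m} = 1). -/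
/-- The `j`-th `m`-falling factorial `x↓_{j,m} = ∏_{i=0}^{j-1} (x - im)`,
with `x↓_{0,m} = 1`. -/
def mFallFact (m : ℕ) (x : ℤ) (j : ℕ) : ℤ := ∏ i ∈ Finset.range j, (x - (i : ℤ) * m)

open scoped Classical in
/-- The finset of all `k`-rook `m`-level placements on the board `b`. -/
noncomputable def placementsBR {n : ℕ} (m : ℕ) (b : Fin n → ℕ) (k : ℕ) :
    Finset (Finset (Fin n × ℕ)) :=
  ((Finset.univ ×ˢ Finset.range (Finset.univ.sup b + 1)).powerset).filter
    (fun P => IsMLevelPlacement m b P ∧ P.card = k)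

lemma mem_placementsBR {m n : ℕ} {b : Fin n → ℕ} {k : ℕ} {P : Finset (Fin n × ℕ)} :
    P ∈ placementsBR m b k ↔ IsMLevelPlacement m b P ∧ P.card = k := by
  classical
  unfold placementsBR
  rw [Finset.mem_filter, Finset.mem_powerset]
  constructor
  · exact fun h => h.2
  · intro h
    refine ⟨?_, h⟩
    intro c hc
    have h1 := h.1.1 c hc
    have h2 : b c.1 ≤ Finset.univ.sup b := Finset.le_sup (Finset.mem_univ _)
    simp only [Finset.mem_product, Finset.mem_univ, Finset.mem_range, true_and]
    omega

lemma mRookNum_eq_cardBR {m n : ℕ} (b : Fin n → ℕ) (k : ℕ) :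
    mRookNum m b k = (placementsBR m b k).card := by
  rw [mRookNum, ← Set.ncard_coe_finset]
  congr 1
  ext P
  simp [mem_placementsBR]

lemma placementsBR_zero {m n : ℕ} (b : Fin n → ℕ) : placementsBR m b 0 = {∅} := by
  ext P
  simp only [mem_placementsBR, Finset.mem_singleton, Finset.card_eq_zero]
  constructor
  · exact fun h => h.2
  · rintro rfl
    exact ⟨⟨fun c hc => absurd hc (Finset.notMem_empty c),
      fun c hc => absurd hc (Finset.notMem_empty c)⟩, rfl⟩

lemma card_le_of_placementBR {m n : ℕ} {b : Fin n → ℕ} {P : Finset (Fin n × ℕ)}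
    (h : IsMLevelPlacement m b P) : P.card ≤ n := by
  classical
  have hinj : Set.InjOn (Prod.fst : Fin n × ℕ → Fin n) ↑P := by
    intro c hc d hd hcd
    by_contra hne
    exact (h.2 c hc d hd hne).1 hcd
  calc P.card = (P.image Prod.fst).card := (Finset.card_image_of_injOn hinj).symm
    _ ≤ Finset.univ.card := Finset.card_le_univ _
    _ = n := by simp

lemma placementsBR_eq_empty {m n : ℕ} (b : Fin n → ℕ) {k : ℕ} (hk : n < k) :
    placementsBR m b k = ∅ := by
  ext P
  simp only [mem_placementsBR, Finset.notMem_empty, iff_false, not_and]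
  intro h hc
  have := card_le_of_placementBR h
  omega

/-- Key singleton-board lemma: every level hit by a cell of a non-last column
is fully contained (all `m` rows) below the height of the last column. -/
lemma level_boundBR {m n : ℕ} {b : Fin (n + 1) → ℕ} (hm : 0 < m)
    (hb : IsSingletonBoard m b) {i : Fin (n + 1)} (hi : (i : ℕ) < n) {j : ℕ}
    (hj : j < b i) : m * (j / m) + m ≤ b (Fin.last n) := by
  have hmono := hb.1
  have hle : b i ≤ b (Fin.last n) := hmono (Fin.le_last i)
  by_cases hdvd : m ∣ b i
  · obtain ⟨t, ht⟩ := hdvd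
    have h1 : j / m < t := Nat.div_lt_of_lt_mul (by rw [ht] at hj; exact hj)
    have h2 : m * (j / m + 1) ≤ m * t := Nat.mul_le_mul_left m h1
    rw [← ht] at h2
    have h6 : m * (j / m + 1) = m * (j / m) + m := by ring
    omega
  · have hstep := hb.2 i ⟨(i : ℕ) + 1, by omega⟩ rfl hdvd
    rw [mFloor, mFloor] at hstep
    have h1 : b i / m < b (⟨(i : ℕ) + 1, by omega⟩ : Fin (n + 1)) / m :=
      lt_of_mul_lt_mul_left hstep (Nat.zero_le m)
    have h2 : j / m ≤ b i / m := Nat.div_le_div_right (le_of_lt hj)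
    have h3 : m * (b (⟨(i : ℕ) + 1, by omega⟩ : Fin (n + 1)) / m)
        ≤ b (⟨(i : ℕ) + 1, by omega⟩ : Fin (n + 1)) := Nat.mul_div_le _ m
    have h4 : b (⟨(i : ℕ) + 1, by omega⟩ : Fin (n + 1)) ≤ b (Fin.last n) :=
      hmono (Fin.le_last _)
    have h5 : m * (j / m + 1) ≤ m * (b (⟨(i : ℕ) + 1, by omega⟩ : Fin (n + 1)) / m) :=
      Nat.mul_le_mul_left m (by omega)
    have h6 : m * (j / m + 1) = m * (j / m) + m := by ring
    omega

open scoped Classical in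
noncomputable def freeCellsBR {n : ℕ} (m bN : ℕ) (P : Finset (Fin n × ℕ)) : Finset ℕ :=
  (Finset.range bN).filter (fun j => ∀ c ∈ P, j / m ≠ c.2 / m)

lemma mem_Ico_level {m : ℕ} (hm : 0 < m) (ℓ j : ℕ) :
    j ∈ Finset.Ico (m * ℓ) (m * ℓ + m) ↔ j / m = ℓ := by
  rw [Finset.mem_Ico]
  constructor
  · rintro ⟨ha, hb'⟩
    exact Nat.div_eq_of_lt_le (by rw [mul_comm]; exact ha)
      (by have : (ℓ + 1) * m = m * ℓ + m := by ring
          omega)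
  · rintro rfl
    have h1 := Nat.div_add_mod j m
    have h2 : j % m < m := Nat.mod_lt j hm
    omega

lemma card_freeCellsBR {m n : ℕ} {b : Fin (n + 1) → ℕ} (hm : 0 < m)
    (hb : IsSingletonBoard m b) {P : Finset (Fin n × ℕ)}
    (hP : IsMLevelPlacement m (b ∘ Fin.castSucc) P) :
    P.card * m ≤ b (Fin.last n) ∧
    (freeCellsBR m (b (Fin.last n)) P).card = b (Fin.last n) - P.card * m := by
  classical
  set bN := b (Fin.last n) with hbN
  set blocked : Finset ℕ :=
    P.biUnion (fun c => Finset.Ico (m * (c.2 / m)) (m * (c.2 / m) + m)) with hblocked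
  have hlev : ∀ c ∈ P, m * (c.2 / m) + m ≤ bN := by
    intro c hc
    exact level_boundBR hm hb (i := Fin.castSucc c.1) (by simp) (hP.1 c hc)
  have hdisj : ∀ c ∈ P, ∀ d ∈ P, c ≠ d →
      Disjoint (Finset.Ico (m * (c.2 / m)) (m * (c.2 / m) + m))
        (Finset.Ico (m * (d.2 / m)) (m * (d.2 / m) + m)) := by
    intro c hc d hd hcd
    have hne := (hP.2 c hc d hd hcd).2
    rw [Finset.disjoint_left]
    intro j hj1 hj2
    rw [mem_Ico_level hm] at hj1 hj2
    exact hne (hj1 ▸ hj2)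
  have hcard_blocked : blocked.card = P.card * m := by
    rw [hblocked, Finset.card_biUnion hdisj]
    have : ∀ c ∈ P, (Finset.Ico (m * (c.2 / m)) (m * (c.2 / m) + m)).card = m := by
      intro c _
      rw [Nat.card_Ico, Nat.add_sub_cancel_left]
    rw [Finset.sum_congr rfl this, Finset.sum_const, smul_eq_mul]
  have hsub : blocked ⊆ Finset.range bN := by
    intro j hj
    rw [hblocked, Finset.mem_biUnion] at hj
    obtain ⟨c, hc, hjc⟩ := hj
    rw [Finset.mem_Ico] at hjc
    have := hlev c hc
    rw [Finset.mem_range]; omega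
  have hfree : freeCellsBR m bN P = Finset.range bN \ blocked := by
    ext j
    rw [freeCellsBR, Finset.mem_filter, Finset.mem_sdiff, hblocked, Finset.mem_biUnion]
    constructor
    · rintro ⟨h1, h2⟩
      refine ⟨h1, ?_⟩
      rintro ⟨c, hc, hjc⟩
      exact h2 c hc ((mem_Ico_level hm _ _).1 hjc)
    · rintro ⟨h1, h2⟩
      exact ⟨h1, fun c hc hje => h2 ⟨c, hc, (mem_Ico_level hm _ _).2 hje⟩⟩
  have hble : P.card * m ≤ bN := by
    have := Finset.card_le_card hsub
    rw [hcard_blocked, Finset.card_range] at this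
    exact this
  refine ⟨hble, ?_⟩
  rw [hfree, Finset.card_sdiff_of_subset hsub, hcard_blocked, Finset.card_range]

def cellEmbBR (n : ℕ) : Fin n × ℕ → Fin (n + 1) × ℕ := fun c => (c.1.castSucc, c.2)

lemma cellEmbBR_injective (n : ℕ) : Function.Injective (cellEmbBR n) := by
  rintro ⟨a, b⟩ ⟨c, d⟩ h
  simp only [cellEmbBR, Prod.mk.injEq] at h
  exact Prod.ext (Fin.castSucc_injective n h.1) h.2

lemma fst_ne_last_of_mem_lift {n : ℕ} {P : Finset (Fin n × ℕ)}
    {c : Fin (n + 1) × ℕ} (hc : c ∈ P.image (cellEmbBR n)) : c.1 ≠ Fin.last n := by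
  classical
  rw [Finset.mem_image] at hc
  obtain ⟨c₀, _, rfl⟩ := hc
  exact ne_of_lt (Fin.castSucc_lt_last c₀.1)

lemma last_not_mem_lift {n : ℕ} (P : Finset (Fin n × ℕ)) (j : ℕ) :
    (Fin.last n, j) ∉ P.image (cellEmbBR n) := fun h =>
  fst_ne_last_of_mem_lift h rfl

lemma lift_placement_iff {m n : ℕ} {b : Fin (n + 1) → ℕ} (P : Finset (Fin n × ℕ)) :
    IsMLevelPlacement m (b ∘ Fin.castSucc) P ↔
      IsMLevelPlacement m b (P.image (cellEmbBR n)) := by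
  classical
  constructor
  · intro h
    constructor
    · intro c hc
      rw [Finset.mem_image] at hc
      obtain ⟨c₀, hc₀, rfl⟩ := hc
      exact h.1 c₀ hc₀
    · intro c hc d hd hcd
      rw [Finset.mem_image] at hc hd
      obtain ⟨c₀, hc₀, rfl⟩ := hc
      obtain ⟨d₀, hd₀, rfl⟩ := hd
      have hne : c₀ ≠ d₀ := fun h' => hcd (by rw [h'])
      obtain ⟨h1, h2⟩ := h.2 c₀ hc₀ d₀ hd₀ hne
      exact ⟨fun h' => h1 (Fin.castSucc_injective n h'), h2⟩
  · intro h
    constructor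
    · intro c hc
      exact h.1 (cellEmbBR n c) (Finset.mem_image_of_mem _ hc)
    · intro c hc d hd hcd
      have := h.2 (cellEmbBR n c) (Finset.mem_image_of_mem _ hc) (cellEmbBR n d)
        (Finset.mem_image_of_mem _ hd) (fun h' => hcd (cellEmbBR_injective n h'))
      exact ⟨fun h' => this.1 (by simp only [cellEmbBR]; rw [h']), this.2⟩

lemma exists_liftBR {n : ℕ} (P : Finset (Fin (n + 1) × ℕ))
    (h : ∀ c ∈ P, c.1 ≠ Fin.last n) :
    ∃ P₀ : Finset (Fin n × ℕ), P₀.image (cellEmbBR n) = P := by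
  classical
  refine ⟨P.preimage (cellEmbBR n) (cellEmbBR_injective n).injOn, ?_⟩
  rw [Finset.image_preimage]
  apply Finset.filter_true_of_mem
  intro c hc
  obtain ⟨i, hi⟩ := Fin.exists_castSucc_eq.mpr (h c hc)
  exact ⟨(i, c.2), Prod.ext hi rfl⟩

lemma placement_mono {m n : ℕ} {b : Fin n → ℕ} {P Q : Finset (Fin n × ℕ)}
    (h : IsMLevelPlacement m b P) (hQ : Q ⊆ P) : IsMLevelPlacement m b Q :=
  ⟨fun c hc => h.1 c (hQ hc), fun c hc d hd hcd => h.2 c (hQ hc) d (hQ hd) hcd⟩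

lemma placementsBR_succ_card {m n : ℕ} (hm : 0 < m) {b : Fin (n + 1) → ℕ}
    (hb : IsSingletonBoard m b) (k : ℕ) :
    (placementsBR m b (k + 1)).card =
      (placementsBR m (b ∘ Fin.castSucc) (k + 1)).card +
        (placementsBR m (b ∘ Fin.castSucc) k).card * (b (Fin.last n) - k * m) := by
  classical
  set b' := b ∘ Fin.castSucc with hb'def
  set bN := b (Fin.last n) with hbNdef
  set lift : Finset (Fin n × ℕ) → Finset (Fin (n + 1) × ℕ) :=
    fun P => P.image (cellEmbBR n) with hliftdef
  have hlift_card : ∀ P, (lift P).card = P.card := fun P =>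
    Finset.card_image_of_injective P (cellEmbBR_injective n)
  have hlift_inj : Function.Injective lift := Finset.image_injective (cellEmbBR_injective n)
  set A := (placementsBR m b (k + 1)).filter (fun P => ∀ c ∈ P, c.1 ≠ Fin.last n) with hAdef
  set B := (placementsBR m b (k + 1)).filter
    (fun P => ¬ ∀ c ∈ P, c.1 ≠ Fin.last n) with hBdef
  have hAB : (placementsBR m b (k + 1)).card = A.card + B.card :=
    (Finset.card_filter_add_card_filter_not _).symm
  -- A is in bijection with placements on b'
  have hA : A.card = (placementsBR m b' (k + 1)).card := by
    symm
    apply Finset.card_bij (fun P _ => lift P)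
    · intro P hP
      rw [mem_placementsBR] at hP
      rw [hAdef, Finset.mem_filter, mem_placementsBR]
      refine ⟨⟨(lift_placement_iff P).1 hP.1, by rw [hlift_card, hP.2]⟩, ?_⟩
      intro c hc
      exact fst_ne_last_of_mem_lift hc
    · intro P₁ _ P₂ _ h
      exact hlift_inj h
    · intro P hP
      rw [hAdef, Finset.mem_filter] at hP
      obtain ⟨hP1, hP2⟩ := hP
      rw [mem_placementsBR] at hP1
      obtain ⟨P₀, hP₀⟩ := exists_liftBR P hP2
      refine ⟨P₀, ?_, hP₀⟩
      rw [mem_placementsBR]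
      constructor
      · rw [lift_placement_iff, hP₀]; exact hP1.1
      · have := hlift_card P₀
        rw [hliftdef] at this
        simp only at this
        rw [hP₀] at this
        omega
  -- B is a disjoint union over (k)-placements on b' and free cells
  have hBeq : B = (placementsBR m b' k).biUnion
      (fun P₀ => (freeCellsBR m bN P₀).image
        (fun j => insert (Fin.last n, j) (lift P₀))) := by
    ext P
    rw [hBdef, Finset.mem_filter, Finset.mem_biUnion]
    constructor
    · rintro ⟨hP1, hP2⟩
      rw [mem_placementsBR] at hP1
      push_neg at hP2
      obtain ⟨c, hc, hc1⟩ := hP2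
      set Q := P.erase c with hQdef
      have hQcols : ∀ d ∈ Q, d.1 ≠ Fin.last n := by
        intro d hd hdl
        have hdP := Finset.mem_of_mem_erase hd
        have hdc : c ≠ d := fun h => (Finset.ne_of_mem_erase hd) h.symm
        exact (hP1.1.2 c hc d hdP hdc).1 (by rw [hc1, hdl])
      obtain ⟨Q₀, hQ₀⟩ := exists_liftBR Q hQcols
      refine ⟨Q₀, ?_, ?_⟩
      · rw [mem_placementsBR]
        constructor
        · rw [lift_placement_iff, hQ₀]
          exact placement_mono hP1.1 (Finset.erase_subset c P)
        · have h1 := hlift_card Q₀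
          rw [hliftdef] at h1
          simp only at h1
          rw [hQ₀] at h1
          have h2 : Q.card = k := by
            rw [hQdef, Finset.card_erase_of_mem hc, hP1.2]
            omega
          omega
      · rw [Finset.mem_image]
        refine ⟨c.2, ?_, ?_⟩
        · rw [freeCellsBR, Finset.mem_filter, Finset.mem_range]
          constructor
          · have := hP1.1.1 c hc
            rw [hc1] at this
            exact this
          · intro d₀ hd₀
            have hdQ : cellEmbBR n d₀ ∈ Q := by rw [← hQ₀]; exact Finset.mem_image_of_mem _ hd₀
            have hdP := Finset.mem_of_mem_erase hdQ
            have hdc : c ≠ cellEmbBR n d₀ := fun h => (Finset.ne_of_mem_erase hdQ) h.symm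
            exact (hP1.1.2 c hc _ hdP hdc).2
        · have hcpair : c = (Fin.last n, c.2) := Prod.ext hc1 rfl
          rw [hliftdef]
          simp only
          rw [hQ₀, hQdef, ← hcpair, Finset.insert_erase hc]
    · rintro ⟨P₀, hP₀, hPim⟩
      rw [Finset.mem_image] at hPim
      obtain ⟨j, hj, rfl⟩ := hPim
      rw [mem_placementsBR] at hP₀
      rw [freeCellsBR, Finset.mem_filter, Finset.mem_range] at hj
      have hnotmem : (Fin.last n, j) ∉ lift P₀ := last_not_mem_lift P₀ j
      have hliftpl : IsMLevelPlacement m b (lift P₀) := (lift_placement_iff P₀).1 hP₀.1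
      constructor
      · rw [mem_placementsBR]
        constructor
        · constructor
          · intro c hc
            rw [Finset.mem_insert] at hc
            rcases hc with rfl | hc
            · exact hj.1
            · exact hliftpl.1 c hc
          · intro c hc d hd hcd
            rw [Finset.mem_insert] at hc hd
            rcases hc with rfl | hc <;> rcases hd with rfl | hd
            · exact absurd rfl hcd
            · rw [hliftdef] at hd
              simp only at hd
              rw [Finset.mem_image] at hd
              obtain ⟨d₀, hd₀, rfl⟩ := hd
              refine ⟨?_, ?_⟩
              · exact fun h => (ne_of_lt (Fin.castSucc_lt_last d₀.1)) h.symm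
              · exact hj.2 d₀ hd₀
            · rw [hliftdef] at hc
              simp only at hc
              rw [Finset.mem_image] at hc
              obtain ⟨c₀, hc₀, rfl⟩ := hc
              refine ⟨ne_of_lt (Fin.castSucc_lt_last c₀.1), ?_⟩
              exact fun h => (hj.2 c₀ hc₀) h.symm
            · exact hliftpl.2 c hc d hd hcd
        · rw [Finset.card_insert_of_notMem hnotmem, hlift_card, hP₀.2]
      · intro hall
        exact hall (Fin.last n, j) (Finset.mem_insert_self _ _) rfl
  have hBcard : B.card = (placementsBR m b' k).card * (bN - k * m) := by
    rw [hBeq]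
    rw [Finset.card_biUnion]
    · have hterm : ∀ P₀ ∈ placementsBR m b' k,
          ((freeCellsBR m bN P₀).image (fun j => insert (Fin.last n, j) (lift P₀))).card
            = bN - k * m := by
        intro P₀ hP₀
        rw [mem_placementsBR] at hP₀
        have hinj : Set.InjOn (fun j => insert (Fin.last n, j) (lift P₀))
            ↑(freeCellsBR m bN P₀) := by
          intro j₁ _ j₂ _ h
          simp only at h
          have : (Fin.last n, j₁) ∈ insert (Fin.last n, j₂) (lift P₀) := by
            rw [← h]; exact Finset.mem_insert_self _ _
          rw [Finset.mem_insert] at this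
          rcases this with h' | h'
          · exact (Prod.ext_iff.1 h').2
          · exact absurd h' (last_not_mem_lift P₀ j₁)
        rw [Finset.card_image_of_injOn hinj]
        have := card_freeCellsBR hm hb hP₀.1
        rw [hP₀.2] at this
        exact this.2
      rw [Finset.sum_congr rfl hterm, Finset.sum_const, smul_eq_mul]
    · intro P₁ hP₁ P₂ hP₂ hne
      rw [Function.onFun, Finset.disjoint_left]
      intro P hPmem1 hPmem2
      rw [Finset.mem_image] at hPmem1 hPmem2
      obtain ⟨j₁, _, h1⟩ := hPmem1
      obtain ⟨j₂, _, h2⟩ := hPmem2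
      apply hne
      apply hlift_inj
      have hj12 : j₁ = j₂ := by
        have : (Fin.last n, j₁) ∈ insert (Fin.last n, j₂) (lift P₂) := by
          rw [h2, ← h1]; exact Finset.mem_insert_self _ _
        rw [Finset.mem_insert] at this
        rcases this with h' | h'
        · exact (Prod.ext_iff.1 h').2
        · exact absurd h' (last_not_mem_lift P₂ j₁)
      have h3 : insert (Fin.last n, j₁) (lift P₁) = insert (Fin.last n, j₁) (lift P₂) := by
        rw [h1, hj12, h2]
      have h4 := congrArg (fun S => Finset.erase S (Fin.last n, j₁)) h3
      rwa [Finset.erase_insert (last_not_mem_lift P₁ j₁),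
        Finset.erase_insert (last_not_mem_lift P₂ j₁)] at h4
  rw [hAB, hA, hBcard]

lemma mRookNum_zeroBR {m n : ℕ} (b : Fin n → ℕ) : mRookNum m b 0 = 1 := by
  rw [mRookNum_eq_cardBR, placementsBR_zero, Finset.card_singleton]

lemma mRookNum_succBR {m n : ℕ} (hm : 0 < m) {b : Fin (n + 1) → ℕ}
    (hb : IsSingletonBoard m b) (k : ℕ) :
    (mRookNum m b (k + 1) : ℤ) = (mRookNum m (b ∘ Fin.castSucc) (k + 1) : ℤ)
      + ((b (Fin.last n) : ℤ) - (m : ℤ) * (k : ℤ)) * (mRookNum m (b ∘ Fin.castSucc) k : ℤ) := by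
  rw [mRookNum_eq_cardBR, mRookNum_eq_cardBR, mRookNum_eq_cardBR,
    placementsBR_succ_card hm hb k]
  by_cases h : placementsBR m (b ∘ Fin.castSucc) k = ∅
  · simp [h]
  · obtain ⟨P₀, hP₀⟩ := Finset.nonempty_iff_ne_empty.2 h
    rw [mem_placementsBR] at hP₀
    have hle := (card_freeCellsBR hm hb hP₀.1).1
    rw [hP₀.2] at hle
    push_cast [Nat.cast_sub hle]
    ring

lemma isSingleton_castSuccBR {m n : ℕ} {b : Fin (n + 1) → ℕ}
    (hb : IsSingletonBoard m b) : IsSingletonBoard m (b ∘ Fin.castSucc) := by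
  constructor
  · intro i j hij
    exact hb.1 (by simpa using hij)
  · intro i j hij hdvd
    exact hb.2 i.castSucc j.castSucc (by simpa using hij) hdvd

lemma mRookNum_top_zeroBR {m n : ℕ} (b : Fin n → ℕ) : mRookNum m b (n + 1) = 0 := by
  rw [mRookNum_eq_cardBR, placementsBR_eq_empty b (by omega), Finset.card_empty]

theorem stmt18' (m : ℕ) (hm : 0 < m) {n : ℕ} (b : Fin n → ℕ)
    (hb : IsSingletonBoard m b) :
    ∀ x : ℤ, ∑ k ∈ Finset.range (n + 1), (mRookNum m b k : ℤ) * mFallFact m x (n - k) =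
      ∏ i : Fin n, (x + (b i : ℤ) - (m : ℤ) * (i : ℤ)) := by
  induction n with
  | zero =>
    intro x
    simp [mRookNum_zeroBR, mFallFact]
  | succ n ih =>
    intro x
    set b' := b ∘ Fin.castSucc with hb'def
    have hbs' := isSingleton_castSuccBR hb
    have hIH := ih b' hbs' x
    set bN := b (Fin.last n) with hbNdef
    -- split off k = 0 and use the recurrence
    rw [Finset.sum_range_succ']
    have hsum1 : ∑ k ∈ Finset.range (n + 1),
        (mRookNum m b (k + 1) : ℤ) * mFallFact m x (n + 1 - (k + 1)) =
        ∑ k ∈ Finset.range (n + 1),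
          ((mRookNum m b' (k + 1) : ℤ) * mFallFact m x (n - k)
            + ((bN : ℤ) - (m : ℤ) * k) * (mRookNum m b' k : ℤ) * mFallFact m x (n - k)) := by
      apply Finset.sum_congr rfl
      intro k hk
      rw [Nat.succ_sub_succ, mRookNum_succBR hm hb k]
      ring
    rw [hsum1, Finset.sum_add_distrib]
    -- the zeroth term
    have hzero : (mRookNum m b 0 : ℤ) * mFallFact m x (n + 1 - 0) = mFallFact m x (n + 1) := by
      rw [mRookNum_zeroBR]; push_cast; ring
    rw [hzero]
    -- reassemble the shifted sum
    have hshift : ∑ k ∈ Finset.range (n + 1),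
        (mRookNum m b' (k + 1) : ℤ) * mFallFact m x (n - k) + mFallFact m x (n + 1) =
        ∑ k ∈ Finset.range (n + 1), (mRookNum m b' k : ℤ) * mFallFact m x (n + 1 - k) := by
      have h1 := Finset.sum_range_succ' (fun k => (mRookNum m b' k : ℤ) * mFallFact m x (n + 1 - k)) (n + 1)
      have h2 := Finset.sum_range_succ (fun k => (mRookNum m b' k : ℤ) * mFallFact m x (n + 1 - k)) (n + 1)
      rw [mRookNum_top_zeroBR] at h2
      simp only [Nat.cast_zero, zero_mul, add_zero] at h2
      have h3 : ∀ k ∈ Finset.range (n + 1),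
          (mRookNum m b' (k + 1) : ℤ) * mFallFact m x (n + 1 - (k + 1)) =
          (mRookNum m b' (k + 1) : ℤ) * mFallFact m x (n - k) := by
        intro k hk
        rw [Nat.succ_sub_succ]
      rw [Finset.sum_congr rfl h3] at h1
      rw [mRookNum_zeroBR] at h1
      simp only [Nat.cast_one, one_mul, Nat.sub_zero] at h1
      rw [← h2, h1]
    rw [add_right_comm, hshift]
    -- combine the two sums
    have hcomb : ∑ k ∈ Finset.range (n + 1), (mRookNum m b' k : ℤ) * mFallFact m x (n + 1 - k)
        + ∑ k ∈ Finset.range (n + 1),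
          ((bN : ℤ) - (m : ℤ) * k) * (mRookNum m b' k : ℤ) * mFallFact m x (n - k)
        = (x + (bN : ℤ) - (m : ℤ) * n) *
            ∑ k ∈ Finset.range (n + 1), (mRookNum m b' k : ℤ) * mFallFact m x (n - k) := by
      rw [← Finset.sum_add_distrib, Finset.mul_sum]
      apply Finset.sum_congr rfl
      intro k hk
      rw [Finset.mem_range] at hk
      have hkn : k ≤ n := by omega
      have hfact : mFallFact m x (n + 1 - k) =
          mFallFact m x (n - k) * (x - ((n - k : ℕ) : ℤ) * m) := by
        have : n + 1 - k = (n - k) + 1 := by omega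
        rw [this, mFallFact, mFallFact, Finset.prod_range_succ]
      rw [hfact]
      have hcast : ((n - k : ℕ) : ℤ) = (n : ℤ) - (k : ℤ) := by
        rw [Nat.cast_sub hkn]
      rw [hcast]
      ring
    rw [hcomb, hIH]
    rw [Fin.prod_univ_castSucc (fun i : Fin (n + 1) => x + (b i : ℤ) - (m : ℤ) * (i : ℤ))]
    simp only [Fin.coe_castSucc, Fin.val_last, hb'def, Function.comp_apply]
    ring

/-- Briggs–Remmel factorization: for a singleton board
`b = (b_1,…,b_n)` and every integer `x`,
`∑_{k=0}^n r_{k,m}(B) x↓_{n-k,m} = ∏_{i=1}^n (x + b_i - m(i-1))`. -/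
theorem stmt18 (m : ℕ) (hm : 0 < m) {n : ℕ} (b : Fin n → ℕ)
    (hb : IsSingletonBoard m b) :
    ∀ x : ℤ, ∑ k ∈ Finset.range (n + 1), (mRookNum m b k : ℤ) * mFallFact m x (n - k) =
      ∏ i : Fin n, (x + (b i : ℤ) - (m : ℤ) * (i : ℤ)) := by
  exact stmt18' m hm b hb
end

section
/- (Barrese–Loehr–Remmel–Sagan) Fix a positive integer m. A vector ξ = ⟨ξ_1, ξ_2, …, ξ_n⟩ of integers is the m-level root vector of some singleton board with n columns if and only if (i) ξ_1 ≤ 0, (ii) ξ_i + m ≥ ξ_{i+1} for all 1 ≤ i < n, and (iii) whenever neither ξ_i nor ξ_{i+1} is a multiple of m, ⌊ξ_i⌋_m ≥ ⌊ξ_{i+1}⌋_m. -/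

lemma emod_eq_aux (m : ℕ) (q r x : ℤ) (hx : x = m * q + r) (h0 : 0 ≤ r) (h1 : r < m) :
    x % (m : ℤ) = r := by
  subst hx
  rw [add_comm, Int.add_mul_emod_self_left, Int.emod_eq_of_lt h0 h1]

lemma floorZ_eq_aux (m : ℕ) (q r x : ℤ) (hx : x = m * q + r) (h0 : 0 ≤ r) (h1 : r < m) :
    mFloorZ m x = m * q := by
  unfold mFloorZ
  rw [emod_eq_aux m q r x hx h0 h1]
  omega

/-- Barrese–Loehr–Remmel–Sagan: an integer vector `ξ` of length `n`
is the `m`-level root vector of some singleton board with `n` columns if and only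
if (i) `ξ_1 ≤ 0`, (ii) `ξ_i + m ≥ ξ_{i+1}` for all `1 ≤ i < n`, and (iii) whenever
neither `ξ_i` nor `ξ_{i+1}` is a multiple of `m`, `⌊ξ_i⌋_m ≥ ⌊ξ_{i+1}⌋_m`. -/
theorem stmt19 (m : ℕ) (hm : 0 < m) {n : ℕ} (ξ : Fin n → ℤ) :
    (∃ b : Fin n → ℕ, IsSingletonBoard m b ∧ ξ = mRootVec m b) ↔
      ((∀ h : 0 < n, ξ ⟨0, h⟩ ≤ 0) ∧
       (∀ i : ℕ, ∀ h : i + 1 < n, ξ ⟨i + 1, h⟩ ≤ ξ ⟨i, by omega⟩ + m) ∧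
       (∀ i : ℕ, ∀ h : i + 1 < n,
          ¬ ((m : ℤ) ∣ ξ ⟨i, by omega⟩) → ¬ ((m : ℤ) ∣ ξ ⟨i + 1, h⟩) →
          mFloorZ m (ξ ⟨i + 1, h⟩) ≤ mFloorZ m (ξ ⟨i, by omega⟩))) := by
  constructor
  · rintro ⟨b, ⟨hmono, hsing⟩, rfl⟩
    refine ⟨?_, ?_, ?_⟩
    · intro h
      have h0 : ((⟨0, h⟩ : Fin n) : ℤ) = 0 := by simp
      simp only [mRootVec, h0, mul_zero, zero_sub, neg_nonpos]
      positivity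
    · intro i h
      have hle : (b ⟨i, by omega⟩ : ℤ) ≤ (b ⟨i + 1, h⟩ : ℤ) := by
        have : (⟨i, by omega⟩ : Fin n) ≤ (⟨i + 1, h⟩ : Fin n) := by
          simp [Fin.le_def]
        exact_mod_cast hmono this
      simp only [mRootVec]
      push_cast
      linarith
    · intro i h hd1 hd2
      set i1 : Fin n := ⟨i, by omega⟩ with hi1
      set i2 : Fin n := ⟨i + 1, h⟩ with hi2
      have hv1 : ((i1 : ℕ) : ℤ) = i := by simp [hi1]
      have hv2 : ((i2 : ℕ) : ℤ) = i + 1 := by simp [hi2]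
      obtain ⟨q1, r1, hb1, hr1⟩ : ∃ q r : ℕ, b i1 = m * q + r ∧ r < m :=
        ⟨b i1 / m, b i1 % m, (Nat.div_add_mod _ _).symm, Nat.mod_lt _ hm⟩
      obtain ⟨q2, r2, hb2, hr2⟩ : ∃ q r : ℕ, b i2 = m * q + r ∧ r < m :=
        ⟨b i2 / m, b i2 % m, (Nat.div_add_mod _ _).symm, Nat.mod_lt _ hm⟩
      have hr1ne : r1 ≠ 0 := by
        rintro rfl
        refine hd1 ⟨(i : ℤ) - q1, ?_⟩
        simp only [mRootVec, hv1, hb1]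
        push_cast
        ring
      have hr2ne : r2 ≠ 0 := by
        rintro rfl
        refine hd2 ⟨((i : ℤ) + 1) - q2, ?_⟩
        simp only [mRootVec, hv2, hb2]
        push_cast
        ring
      have hndvd : ¬ (m ∣ b i1) := by
        rw [hb1]
        intro hdd
        exact hr1ne (Nat.eq_zero_of_dvd_of_lt ((Nat.dvd_add_right ⟨q1, rfl⟩).mp hdd) hr1)
      have hq : q1 < q2 := by
        have hs := hsing i1 i2 (by simp [hi1, hi2]) hndvd
        simp only [mFloor, hb1, hb2] at hs
        rw [Nat.mul_add_div hm, Nat.mul_add_div hm, Nat.div_eq_of_lt hr1,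
          Nat.div_eq_of_lt hr2, add_zero, add_zero] at hs
        exact Nat.lt_of_mul_lt_mul_left hs
      have hf1 : mFloorZ m (mRootVec m b i1) = m * ((i : ℤ) - q1 - 1) := by
        apply floorZ_eq_aux m _ ((m : ℤ) - r1)
        · simp only [mRootVec, hv1, hb1]
          push_cast
          ring
        · omega
        · omega
      have hf2 : mFloorZ m (mRootVec m b i2) = m * ((i : ℤ) - q2) := by
        apply floorZ_eq_aux m _ ((m : ℤ) - r2)
        · simp only [mRootVec, hv2, hb2]
          push_cast
          ring
        · omega
        · omega
      rw [hf1, hf2]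
      apply mul_le_mul_of_nonneg_left _ (by positivity)
      have : (q1 : ℤ) < q2 := by exact_mod_cast hq
      omega
  · rintro ⟨h1, h2, h3⟩
    have hnn : ∀ i : ℕ, ∀ hi : i < n, 0 ≤ (m : ℤ) * i - ξ ⟨i, hi⟩ := by
      intro i
      induction i with
      | zero =>
        intro hi
        have h0 := h1 (by omega)
        push_cast
        linarith
      | succ i ih =>
        intro hi
        have hp := ih (by omega)
        have hs := h2 i hi
        push_cast
        push_cast at hp
        linarith
    set b : Fin n → ℕ := fun i => ((m : ℤ) * i - ξ i).toNat with hbdef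
    have hb : ∀ i : Fin n, (b i : ℤ) = (m : ℤ) * i - ξ i := by
      intro i
      have h0 := hnn i.1 i.2
      simp only [hbdef]
      rw [Int.toNat_of_nonneg]
      exact_mod_cast h0
    have hxi : ∀ i : Fin n, ξ i = (m : ℤ) * i - b i := by
      intro i
      rw [hb i]
      ring
    have hdvd_iff : ∀ i : Fin n, ((m : ℤ) ∣ ξ i) ↔ (m ∣ b i) := by
      intro i
      constructor
      · intro hx
        have hz : (m : ℤ) ∣ (b i : ℤ) := by
          rw [hb i]
          exact dvd_sub (Dvd.intro _ rfl) hx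
        exact_mod_cast hz
      · intro hx
        rw [hxi i]
        exact dvd_sub (Dvd.intro _ rfl) (Int.natCast_dvd_natCast.mpr hx)
    have hadj : ∀ i : ℕ, ∀ hi : i + 1 < n, b ⟨i, by omega⟩ ≤ b ⟨i + 1, hi⟩ := by
      intro i hi
      have e1 := hb ⟨i, by omega⟩
      have e2 := hb ⟨i + 1, hi⟩
      have hs := h2 i hi
      have hc : (b (⟨i, by omega⟩ : Fin n) : ℤ) ≤ (b (⟨i + 1, hi⟩ : Fin n) : ℤ) := by
        rw [e1, e2]
        push_cast
        linarith
      exact_mod_cast hc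
    have hmono' : ∀ j : ℕ, ∀ hj : j < n, ∀ i : ℕ, ∀ hi : i < n, i ≤ j →
        b ⟨i, hi⟩ ≤ b ⟨j, hj⟩ := by
      intro j
      induction j with
      | zero =>
        intro hj i hi hij
        have : i = 0 := by omega
        subst this
        exact le_refl _
      | succ j ih =>
        intro hj i hi hij
        rcases Nat.eq_or_lt_of_le hij with heq | hlt
        · subst heq
          exact le_refl _
        · exact le_trans (ih (by omega) i hi (by omega)) (hadj j hj)
    refine ⟨b, ⟨?_, ?_⟩, ?_⟩
    · intro i j hij
      have := hmono' j.1 j.2 i.1 i.2 hij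
      simpa using this
    · intro i j hj hd
      have hjlt : (i : ℕ) + 1 < n := by rw [← hj]; exact j.2
      have hje : j = ⟨(i : ℕ) + 1, hjlt⟩ := Fin.ext hj
      have hie : i = ⟨(i : ℕ), i.2⟩ := Fin.ext rfl
      obtain ⟨q1, r1, hb1, hr1⟩ : ∃ q r : ℕ, b i = m * q + r ∧ r < m :=
        ⟨b i / m, b i % m, (Nat.div_add_mod _ _).symm, Nat.mod_lt _ hm⟩
      obtain ⟨q2, r2, hb2, hr2⟩ : ∃ q r : ℕ, b j = m * q + r ∧ r < m :=
        ⟨b j / m, b j % m, (Nat.div_add_mod _ _).symm, Nat.mod_lt _ hm⟩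
      have hr1ne : r1 ≠ 0 := by
        rintro rfl
        rw [add_zero] at hb1
        exact hd ⟨q1, hb1⟩
      have hvi : ((i : ℕ) : ℤ) = (i : ℤ) := rfl
      have hq12 : q1 < q2 := by
        by_cases hdj : m ∣ b j
        · have hr2z : r2 = 0 := by
            exact Nat.eq_zero_of_dvd_of_lt ((Nat.dvd_add_right ⟨q2, rfl⟩).mp (hb2 ▸ hdj)) hr2
          subst hr2z
          have hle : b i ≤ b j := by
            have hm2 := hmono' j.1 j.2 i.1 i.2 (by omega)
            simpa using hm2
          rw [hb1, hb2, add_zero] at hle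
          have hmul : m * q1 < m * q2 := by
            have : 0 < r1 := Nat.pos_of_ne_zero hr1ne
            linarith
          exact Nat.lt_of_mul_lt_mul_left hmul
        · have hxd1 : ¬ ((m : ℤ) ∣ ξ ⟨(i : ℕ), by omega⟩) := by
            rw [← hie, hdvd_iff]
            exact hd
          have hxd2 : ¬ ((m : ℤ) ∣ ξ ⟨(i : ℕ) + 1, hjlt⟩) := by
            rw [← hje, hdvd_iff]
            exact hdj
          have hf := h3 (i : ℕ) hjlt hxd1 hxd2
          rw [← hie, ← hje] at hf
          have hr2ne : r2 ≠ 0 := by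
            rintro rfl
            rw [add_zero] at hb2
            exact hdj ⟨q2, hb2⟩
          have hf1 : mFloorZ m (ξ i) = m * ((i : ℤ) - q1 - 1) := by
            apply floorZ_eq_aux m _ ((m : ℤ) - r1)
            · rw [hxi i, hb1]
              push_cast
              ring
            · omega
            · omega
          have hf2 : mFloorZ m (ξ j) = m * (((i : ℤ) + 1) - q2 - 1) := by
            apply floorZ_eq_aux m _ ((m : ℤ) - r2)
            · rw [hxi j, hb2, hje]
              push_cast
              ring
            · omega
            · omega
          rw [hf1, hf2] at hf
          have hml : ((i : ℤ) + 1) - q2 - 1 ≤ (i : ℤ) - q1 - 1 := by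
            have hmpos : (0 : ℤ) < m := by exact_mod_cast hm
            exact le_of_mul_le_mul_left hf hmpos
          have : (q1 : ℤ) < (q2 : ℤ) := by omega
          exact_mod_cast this
      simp only [mFloor, hb1, hb2]
      rw [Nat.mul_add_div hm, Nat.mul_add_div hm, Nat.div_eq_of_lt hr1,
        Nat.div_eq_of_lt hr2, add_zero, add_zero]
      exact mul_lt_mul_of_pos_left hq12 hm
    · funext i
      simp only [mRootVec]
      rw [hb i]
      ring
end
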